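/- arXiv:1206.5081 — 5 statements merged into one kernel-verified Lean document; each statement's English description precedes it below -/
import Mathlib

section
/- Let q ∈ L¹[0,1], λ ∈ ℝ, and let y be a test function. Then the following are equivalent: (i) for every test function z one has ∫₀¹ (y'(x) z'(x) + (q(x) − λ) y(x) z(x)) dx + k₀² y(0) z(0) + k₁² y(1) z(1) = 0; (ii) y' has an absolutely continuous representative w on [0,1] whose derivative satisfies w' = (q − λ)·y almost everywhere (i.e. y ∈ W₁²[0,1] solves −y'' + (q − λ) y = 0 a.e.), and the boundary conditions w(0) − k₀² y(0) = 0 and w(1) + k₁² y(1) = 0 hold. -/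
open MeasureTheory Set Real Filter

/-- A test function on `[0,1]`: `y` is absolutely continuous on `[0,1]` with
derivative `g` belonging to `L²[0,1]`. -/
def IsTest (y g : ℝ → ℝ) : Prop :=
  (∀ x ∈ Icc (0:ℝ) 1, y x = y 0 + ∫ t in (0:ℝ)..x, g t) ∧
  IntegrableOn g (Icc (0:ℝ) 1) ∧
  IntegrableOn (fun x => (g x) ^ 2) (Icc (0:ℝ) 1)

/-- The set of Rayleigh quotients of test functions for the Sturm–Liouville problem
`-y'' + q y = λ y`, `y'(0) - k₀² y(0) = 0`, `y'(1) + k₁² y(1) = 0`. -/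
def RayleighSet (k0 k1 : ℝ) (q : ℝ → ℝ) : Set ℝ :=
  { r : ℝ | ∃ y g : ℝ → ℝ, IsTest y g ∧ (0 < ∫ x in (0:ℝ)..1, (y x) ^ 2) ∧
      r = ((∫ x in (0:ℝ)..1, ((g x) ^ 2 + q x * (y x) ^ 2))
            + k0 ^ 2 * (y 0) ^ 2 + k1 ^ 2 * (y 1) ^ 2) / (∫ x in (0:ℝ)..1, (y x) ^ 2) }

/-- The first eigenvalue `λ₁(q)` defined as the infimum of the Rayleigh quotient. -/
noncomputable def lam1 (k0 k1 : ℝ) (q : ℝ → ℝ) : ℝ :=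
  sInf (RayleighSet k0 k1 q)

lemma mulL2 (a b : ℝ → ℝ) (ha : IntegrableOn a (Icc (0:ℝ) 1))
    (ha2 : IntegrableOn (fun x => (a x) ^ 2) (Icc (0:ℝ) 1))
    (hb : IntegrableOn b (Icc (0:ℝ) 1))
    (hb2 : IntegrableOn (fun x => (b x) ^ 2) (Icc (0:ℝ) 1)) :
    IntegrableOn (fun x => a x * b x) (Icc (0:ℝ) 1) := by
  refine Integrable.mono' (((ha2.add hb2).div_const 2)) (ha.aestronglyMeasurable.mul hb.aestronglyMeasurable) ?_
  refine Eventually.of_forall fun x => ?_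
  simp only [Pi.add_apply, Real.norm_eq_abs, abs_mul]
  nlinarith [sq_nonneg (|a x| - |b x|), sq_abs (a x), sq_abs (b x), abs_nonneg (a x), abs_nonneg (b x)]

lemma fubini_tri (f h : ℝ → ℝ) (hf : IntegrableOn f (Icc (0:ℝ) 1))
    (hh : IntegrableOn h (Icc (0:ℝ) 1)) :
    ∫ t in Ioc (0:ℝ) 1, f t * (∫ s in Ioc (0:ℝ) t, h s)
      = ∫ s in Ioc (0:ℝ) 1, h s * (∫ t in Icc s 1, f t) := by
  set μ := volume.restrict (Ioc (0:ℝ) 1) with hμ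
  have hf' : Integrable f μ := hf.mono_set Ioc_subset_Icc_self
  have hh' : Integrable h μ := hh.mono_set Ioc_subset_Icc_self
  have hK : Integrable (Function.uncurry fun t s => if s ≤ t then f t * h s else 0) (μ.prod μ) := by
    have hbase : Integrable (fun p : ℝ × ℝ => f p.1 * h p.2) (μ.prod μ) := hf'.mul_prod hh'
    have he : (Function.uncurry fun t s => if s ≤ t then f t * h s else 0)
        = {p : ℝ × ℝ | p.2 ≤ p.1}.indicator (fun p => f p.1 * h p.2) := by
      ext p; simp [Function.uncurry, Set.indicator_apply]
    rw [he]
    exact hbase.indicator (measurableSet_le measurable_snd measurable_fst)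
  have hs := integral_integral_swap hK
  calc ∫ t in Ioc (0:ℝ) 1, f t * (∫ s in Ioc (0:ℝ) t, h s)
      = ∫ t, (∫ s, (if s ≤ t then f t * h s else 0) ∂μ) ∂μ := by
        rw [hμ]
        apply setIntegral_congr_fun measurableSet_Ioc
        intro t ht
        have he : ∀ s : ℝ, (if s ≤ t then f t * h s else 0) = (Iic t).indicator (fun s => f t * h s) s := by
          intro s; simp [Set.indicator_apply]
        simp only [he]
        rw [setIntegral_indicator measurableSet_Iic]
        have : Ioc (0:ℝ) 1 ∩ Iic t = Ioc 0 t := by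
          ext x
          simp only [mem_inter_iff, mem_Ioc, mem_Iic]
          constructor
          · rintro ⟨⟨h1, h2⟩, h3⟩; exact ⟨h1, h3⟩
          · rintro ⟨h1, h3⟩; exact ⟨⟨h1, h3.trans ht.2⟩, h3⟩
        rw [this, MeasureTheory.integral_const_mul]
    _ = ∫ s, (∫ t, (if s ≤ t then f t * h s else 0) ∂μ) ∂μ := hs
    _ = ∫ s in Ioc (0:ℝ) 1, h s * (∫ t in Icc s 1, f t) := by
        rw [hμ]
        apply setIntegral_congr_fun measurableSet_Ioc
        intro s hsm
        have he : ∀ t : ℝ, (if s ≤ t then f t * h s else 0) = (Ici s).indicator (fun t => f t * h s) t := by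
          intro t; simp [Set.indicator_apply]
        simp only [he]
        rw [setIntegral_indicator measurableSet_Ici]
        have : Ioc (0:ℝ) 1 ∩ Ici s = Icc s 1 := by
          ext x
          simp only [mem_inter_iff, mem_Ioc, mem_Ici, mem_Icc]
          constructor
          · rintro ⟨⟨h1, h2⟩, h3⟩; exact ⟨h3, h2⟩
          · rintro ⟨h1, h2⟩; exact ⟨⟨lt_of_lt_of_le hsm.1 h1, h2⟩, h1⟩
        rw [this, MeasureTheory.integral_mul_const, mul_comm]

theorem stmt8 (k0 k1 : ℝ) (hk0 : 0 ≤ k0) (hk01 : k0 ≤ k1)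
    (q : ℝ → ℝ) (hq : IntegrableOn q (Icc (0:ℝ) 1)) (lam : ℝ)
    (y g : ℝ → ℝ) (hy : IsTest y g) :
    (∀ z h : ℝ → ℝ, IsTest z h →
        (∫ x in (0:ℝ)..1, (g x * h x + (q x - lam) * y x * z x))
          + k0 ^ 2 * y 0 * z 0 + k1 ^ 2 * y 1 * z 1 = 0)
      ↔ (∃ w : ℝ → ℝ,
          (∀ᵐ x ∂(volume.restrict (Icc (0:ℝ) 1)), w x = g x) ∧
          (∀ x ∈ Icc (0:ℝ) 1, w x = w 0 + ∫ t in (0:ℝ)..x, (q t - lam) * y t) ∧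
          w 0 - k0 ^ 2 * y 0 = 0 ∧ w 1 + k1 ^ 2 * y 1 = 0) := by
  obtain ⟨hyf, hgint, hg2⟩ := hy
  have huIcc : uIcc (0:ℝ) 1 = Icc (0:ℝ) 1 := uIcc_of_le zero_le_one
  -- y is continuous on Icc 0 1
  have hycont : ContinuousOn y (Icc (0:ℝ) 1) := by
    have h1 : ContinuousOn (fun x => y 0 + ∫ t in (0:ℝ)..x, g t) (Icc (0:ℝ) 1) := by
      refine continuousOn_const.add ?_
      have := intervalIntegral.continuousOn_primitive_interval (a := (0:ℝ)) (b := 1)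
        (μ := volume) (f := g) (by rwa [huIcc])
      rwa [huIcc] at this
    exact h1.congr hyf
  -- f := (q - lam) * y is integrable on Icc 0 1
  have hfint : IntegrableOn (fun t => (q t - lam) * y t) (Icc (0:ℝ) 1) := by
    have h1 : IntegrableOn (fun t => q t - lam) (Icc (0:ℝ) 1) :=
      hq.sub ((integrableOn_const_iff (C := lam)).mpr (Or.inr (by simp)))
    exact h1.mul_continuousOn hycont isCompact_Icc
  set W : ℝ → ℝ := fun x => ∫ t in (0:ℝ)..x, (q t - lam) * y t with hW_def
  have hWcont : ContinuousOn W (Icc (0:ℝ) 1) := by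
    have := intervalIntegral.continuousOn_primitive_interval (a := (0:ℝ)) (b := 1)
      (μ := volume) (f := fun t => (q t - lam) * y t) (by rwa [huIcc])
    rwa [huIcc] at this
  have hWint : IntegrableOn W (Icc (0:ℝ) 1) := hWcont.integrableOn_compact isCompact_Icc
  have hW0 : W 0 = 0 := intervalIntegral.integral_same
  have hfii : ∀ a b : ℝ, a ∈ Icc (0:ℝ) 1 → b ∈ Icc (0:ℝ) 1 →
      IntervalIntegrable (fun t => (q t - lam) * y t) volume a b := fun a b ha hb =>
    (hfint.mono_set (uIcc_subset_Icc ha hb)).intervalIntegrable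
  have hWs : ∀ s ∈ Icc (0:ℝ) 1, ∫ t in Icc s 1, (q t - lam) * y t = W 1 - W s := by
    intro s hs
    have hadd := intervalIntegral.integral_add_adjacent_intervals
      (hfii 0 s (by norm_num) hs) (hfii s 1 hs (by norm_num))
    rw [integral_Icc_eq_integral_Ioc, ← intervalIntegral.integral_of_le hs.2]
    rw [hW_def]; simp only []
    linarith [hadd]
  -- key integration-by-parts identity
  have hibp : ∀ h : ℝ → ℝ, IntegrableOn h (Icc (0:ℝ) 1) →
      ∫ t in Ioc (0:ℝ) 1, (q t - lam) * y t * (∫ s in (0:ℝ)..t, h s)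
        = W 1 * (∫ s in Ioc (0:ℝ) 1, h s) - ∫ s in Ioc (0:ℝ) 1, h s * W s := by
    intro h hh
    have step1 : ∫ t in Ioc (0:ℝ) 1, (q t - lam) * y t * (∫ s in (0:ℝ)..t, h s)
        = ∫ t in Ioc (0:ℝ) 1, (q t - lam) * y t * (∫ s in Ioc (0:ℝ) t, h s) := by
      apply setIntegral_congr_fun measurableSet_Ioc
      intro t ht
      dsimp only
      rw [intervalIntegral.integral_of_le ht.1.le]
    rw [step1, fubini_tri _ _ hfint hh]
    have step2 : ∫ s in Ioc (0:ℝ) 1, h s * (∫ t in Icc s 1, (q t - lam) * y t)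
        = ∫ s in Ioc (0:ℝ) 1, (h s * W 1 - h s * W s) := by
      apply setIntegral_congr_fun measurableSet_Ioc
      intro s hsm
      dsimp only
      rw [hWs s (Ioc_subset_Icc_self hsm)]
      ring
    rw [step2, integral_sub]
    · rw [MeasureTheory.integral_mul_const, mul_comm]
    · exact (hh.mono_set Ioc_subset_Icc_self).mul_const _
    · exact ((hh.mul_continuousOn hWcont isCompact_Icc).mono_set Ioc_subset_Icc_self)
  constructor
  · -- weak formulation implies strong
    intro hweak
    -- test with z = 1
    have htest1 : IsTest (fun _ => (1:ℝ)) (fun _ => (0:ℝ)) := by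
      refine ⟨fun x hx => by simp, ?_, ?_⟩
      · exact (integrableOn_const_iff (C := (0:ℝ))).mpr (Or.inr (by simp))
      · simpa using (integrableOn_const_iff (C := (0:ℝ))).mpr (Or.inr (by simp [Real.volume_Icc]))
    have key1 := hweak _ _ htest1
    simp only [mul_zero, mul_one, zero_add] at key1
    -- key1 : W 1 + k0^2 * y 0 + k1^2 * y 1 = 0 (as interval integral)
    have hkey1 : W 1 + k0 ^ 2 * y 0 + k1 ^ 2 * y 1 = 0 := key1
    set w : ℝ → ℝ := fun x => k0 ^ 2 * y 0 + W x with hw_def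
    have hwcont : ContinuousOn w (Icc (0:ℝ) 1) := continuousOn_const.add hWcont
    have hwint : IntegrableOn w (Icc (0:ℝ) 1) := hwcont.integrableOn_compact isCompact_Icc
    -- test with φ = g - w
    have hgw : IntegrableOn (fun x => g x * w x) (Icc (0:ℝ) 1) :=
      hgint.mul_continuousOn hwcont isCompact_Icc
    have hφint : IntegrableOn (fun x => g x - w x) (Icc (0:ℝ) 1) := hgint.sub hwint
    have hφ2 : IntegrableOn (fun x => (g x - w x) ^ 2) (Icc (0:ℝ) 1) := by
      have hcomb : IntegrableOn
          (fun x => (g x) ^ 2 - 2 * (g x * w x) + (w x) ^ 2) (Icc (0:ℝ) 1) :=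
        (hg2.sub (hgw.const_mul 2)).add
          ((hwcont.pow 2).integrableOn_compact isCompact_Icc)
      exact hcomb.congr_fun (fun x _ => by ring) measurableSet_Icc
    have htest2 : IsTest (fun x => ∫ t in (0:ℝ)..x, (g t - w t)) (fun t => g t - w t) := by
      refine ⟨fun x hx => ?_, hφint, hφ2⟩
      simp [intervalIntegral.integral_same]
    have key2 := hweak _ _ htest2
    -- massage key2
    rw [intervalIntegral.integral_of_le zero_le_one] at key2
    have hz0 : (∫ t in (0:ℝ)..(0:ℝ), (g t - w t)) = 0 := intervalIntegral.integral_same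
    rw [hz0] at key2
    have hzcont : ContinuousOn (fun x => ∫ t in (0:ℝ)..x, (g t - w t)) (Icc (0:ℝ) 1) := by
      have := intervalIntegral.continuousOn_primitive_interval (a := (0:ℝ)) (b := 1)
        (μ := volume) (f := fun t => g t - w t) (by rwa [huIcc])
      rwa [huIcc] at this
    have hint1 : IntegrableOn (fun x => g x * (g x - w x)) (Ioc (0:ℝ) 1) := by
      have : IntegrableOn (fun x => g x ^ 2 - g x * w x) (Icc (0:ℝ) 1) := hg2.sub hgw
      exact (this.congr_fun (fun x _ => by ring) measurableSet_Icc).mono_set Ioc_subset_Icc_self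
    have hint2 : IntegrableOn
        (fun x => (q x - lam) * y x * (∫ t in (0:ℝ)..x, (g t - w t))) (Ioc (0:ℝ) 1) :=
      (hfint.mul_continuousOn hzcont isCompact_Icc).mono_set Ioc_subset_Icc_self
    rw [integral_add hint1 hint2] at key2
    rw [hibp _ hφint] at key2
    -- derive ∫ (g-w)^2 = 0
    have hsq : ∫ x in Ioc (0:ℝ) 1, (g x - w x) ^ 2 = 0 := by
      have hexp : ∫ x in Ioc (0:ℝ) 1, (g x - w x) ^ 2
          = (∫ x in Ioc (0:ℝ) 1, g x * (g x - w x))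
            - ∫ x in Ioc (0:ℝ) 1, (g x - w x) * w x := by
        rw [← integral_sub hint1
          ((hφint.mul_continuousOn hwcont isCompact_Icc).mono_set Ioc_subset_Icc_self)]
        apply setIntegral_congr_fun measurableSet_Ioc
        intro x hx
        ring
      have hWeq : ∀ x, (g x - w x) * W x = (g x - w x) * w x - (g x - w x) * (k0 ^ 2 * y 0) := by
        intro x; rw [hw_def]; ring
      have hφ1 : (∫ s in (0:ℝ)..1, (g s - w s)) = ∫ s in Ioc (0:ℝ) 1, (g s - w s) :=
        intervalIntegral.integral_of_le zero_le_one
      rw [hφ1] at key2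
      have hsplit2 : ∫ s in Ioc (0:ℝ) 1, (g s - w s) * W s
          = (∫ s in Ioc (0:ℝ) 1, (g s - w s) * w s)
            - (k0 ^ 2 * y 0) * ∫ s in Ioc (0:ℝ) 1, (g s - w s) := by
        rw [← MeasureTheory.integral_const_mul, ← integral_sub
          ((hφint.mul_continuousOn hwcont isCompact_Icc).mono_set Ioc_subset_Icc_self)
          (((hφint.mono_set Ioc_subset_Icc_self)).const_mul _)]
        apply setIntegral_congr_fun measurableSet_Ioc
        intro x hx
        rw [hw_def]; ring
      rw [hsplit2] at key2
      rw [hexp]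
      linear_combination key2 - (∫ (s : ℝ) in Ioc 0 1, (g s - w s)) * hkey1
    have hae : ∀ᵐ x ∂(volume.restrict (Ioc (0:ℝ) 1)), (g x - w x) ^ 2 = 0 := by
      have hnn : 0 ≤ᵐ[volume.restrict (Ioc (0:ℝ) 1)] fun x => (g x - w x) ^ 2 :=
        Eventually.of_forall fun x => sq_nonneg _
      have hint : Integrable (fun x => (g x - w x) ^ 2) (volume.restrict (Ioc (0:ℝ) 1)) :=
        hφ2.mono_set Ioc_subset_Icc_self
      have := (integral_eq_zero_iff_of_nonneg_ae hnn hint).mp hsq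
      filter_upwards [this] with x hx using hx
    refine ⟨w, ?_, ?_, ?_, ?_⟩
    · rw [← MeasureTheory.restrict_Ioc_eq_restrict_Icc]
      filter_upwards [hae] with x hx
      have : g x - w x = 0 := by
        have := sq_eq_zero_iff.mp hx
        exact this
      linarith
    · intro x hx
      rw [hw_def]
      simp [hW0, hW_def]
    · rw [hw_def]; simp [hW0]
    · rw [hw_def]; simp only []
      linarith [hkey1]
  · -- strong implies weak
    rintro ⟨w, hwg, hwFTC, hw0, hw1⟩ z h ⟨hzf, hhint, hh2⟩
    have hzcont : ContinuousOn z (Icc (0:ℝ) 1) := by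
      have h1 : ContinuousOn (fun x => z 0 + ∫ t in (0:ℝ)..x, h t) (Icc (0:ℝ) 1) := by
        refine continuousOn_const.add ?_
        have := intervalIntegral.continuousOn_primitive_interval (a := (0:ℝ)) (b := 1)
          (μ := volume) (f := h) (by rwa [huIcc])
        rwa [huIcc] at this
      exact h1.congr hzf
    have hwg' : ∀ᵐ x ∂(volume.restrict (Ioc (0:ℝ) 1)), w x = g x :=
      ae_restrict_of_ae_restrict_of_subset Ioc_subset_Icc_self hwg
    rw [intervalIntegral.integral_of_le zero_le_one]
    -- replace g by w a.e., then w and z by their formulas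
    have hstep1 : ∫ x in Ioc (0:ℝ) 1, (g x * h x + (q x - lam) * y x * z x)
        = ∫ x in Ioc (0:ℝ) 1, ((w 0 + W x) * h x + (q x - lam) * y x * (z 0 + ∫ t in (0:ℝ)..x, h t)) := by
      apply integral_congr_ae
      filter_upwards [hwg', ae_restrict_mem measurableSet_Ioc] with x hx hmem
      rw [← hx, hwFTC x (Ioc_subset_Icc_self hmem), ← hzf x (Ioc_subset_Icc_self hmem)]
    rw [hstep1]
    -- integrabilities
    have hHcont : ContinuousOn (fun x => ∫ t in (0:ℝ)..x, h t) (Icc (0:ℝ) 1) := by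
      have := intervalIntegral.continuousOn_primitive_interval (a := (0:ℝ)) (b := 1)
        (μ := volume) (f := h) (by rwa [huIcc])
      rwa [huIcc] at this
    have hI1 : IntegrableOn (fun x => (w 0 + W x) * h x) (Ioc (0:ℝ) 1) :=
      (hhint.continuousOn_mul (continuousOn_const.add hWcont) isCompact_Icc).mono_set
        Ioc_subset_Icc_self
    have hI2 : IntegrableOn
        (fun x => (q x - lam) * y x * (z 0 + ∫ t in (0:ℝ)..x, h t)) (Ioc (0:ℝ) 1) :=
      (hfint.mul_continuousOn (continuousOn_const.add hHcont) isCompact_Icc).mono_set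
        Ioc_subset_Icc_self
    rw [integral_add hI1 hI2]
    -- compute first integral
    have hT1 : ∫ x in Ioc (0:ℝ) 1, (w 0 + W x) * h x
        = w 0 * (∫ x in Ioc (0:ℝ) 1, h x) + ∫ x in Ioc (0:ℝ) 1, h x * W x := by
      rw [← MeasureTheory.integral_const_mul, ← integral_add
        ((hhint.mono_set Ioc_subset_Icc_self).const_mul _)
        (((hhint.mul_continuousOn hWcont isCompact_Icc)).mono_set Ioc_subset_Icc_self)]
      apply setIntegral_congr_fun measurableSet_Ioc
      intro x hx; ring
    -- compute second integral
    have hT2 : ∫ x in Ioc (0:ℝ) 1, (q x - lam) * y x * (z 0 + ∫ t in (0:ℝ)..x, h t)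
        = z 0 * W 1 + (W 1 * (∫ s in Ioc (0:ℝ) 1, h s) - ∫ s in Ioc (0:ℝ) 1, h s * W s) := by
      have hsplit : ∫ x in Ioc (0:ℝ) 1, (q x - lam) * y x * (z 0 + ∫ t in (0:ℝ)..x, h t)
          = (∫ x in Ioc (0:ℝ) 1, (q x - lam) * y x * z 0)
            + ∫ x in Ioc (0:ℝ) 1, (q x - lam) * y x * (∫ t in (0:ℝ)..x, h t) := by
        rw [← integral_add ((hfint.mono_set Ioc_subset_Icc_self).mul_const _)
          ((hfint.mul_continuousOn hHcont isCompact_Icc).mono_set Ioc_subset_Icc_self)]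
        apply setIntegral_congr_fun measurableSet_Ioc
        intro x hx; ring
      rw [hsplit, hibp h hhint, MeasureTheory.integral_mul_const]
      have : (∫ x in Ioc (0:ℝ) 1, (q x - lam) * y x) = W 1 := by
        rw [hW_def]
        simp only []
        rw [intervalIntegral.integral_of_le zero_le_one]
      rw [this]
      ring
    rw [hT1, hT2]
    -- final linear algebra
    have hA : (∫ x in Ioc (0:ℝ) 1, h x) = ∫ t in (0:ℝ)..1, h t :=
      (intervalIntegral.integral_of_le zero_le_one).symm
    have hz1 : z 1 = z 0 + ∫ t in (0:ℝ)..1, h t := hzf 1 (by norm_num)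
    have hwW : w 1 = w 0 + W 1 := hwFTC 1 (by norm_num)
    have hw0' : w 0 = k0 ^ 2 * y 0 := by linarith
    have hw1' : w 1 = -(k1 ^ 2 * y 1) := by linarith
    rw [hA, hz1]
    have hW1 : W 1 = w 1 - w 0 := by linarith
    rw [hW1, hw0', hw1']
    ring
end

section
/- For every q ∈ L¹[0,1] the infimum λ₁(q) is a (finite) real number, and the map q ↦ λ₁(q) from L¹[0,1] to ℝ is continuous with respect to the norm ‖q‖₋ := sup{ ∫₀¹ q(x) z(x) dx : z a test function with ∫₀¹ (z² + (z')²) dx ≤ 1 }; that is, for each q ∈ L¹[0,1] and each ε > 0 there exists δ > 0 such that every q̃ ∈ L¹[0,1] with ‖q̃ − q‖₋ < δ satisfies |λ₁(q̃) − λ₁(q)| < ε. -/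
open MeasureTheory Set Real Filter

/-- The negative Sobolev norm `‖q‖₋ = sup { ∫₀¹ q z dx : ‖z‖_{W₂¹} ≤ 1 }`. -/
noncomputable def normNeg (q : ℝ → ℝ) : ℝ :=
  sSup { r : ℝ | ∃ z h : ℝ → ℝ, IsTest z h ∧
    (∫ x in (0:ℝ)..1, ((z x) ^ 2 + (h x) ^ 2)) ≤ 1 ∧
    r = ∫ x in (0:ℝ)..1, q x * z x }


section SLhelpers

variable {y g q : ℝ → ℝ}


private lemma int01 (f : ℝ → ℝ) : ∫ x in (0:ℝ)..1, f x = ∫ x in Ioc (0:ℝ) 1, f x :=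
  intervalIntegral.integral_of_le zero_le_one

private lemma cs_lemma {S : Set ℝ} (hS : MeasurableSet S) (hfin : volume S ≠ ⊤) {g : ℝ → ℝ}
    (h1 : IntegrableOn (fun x => |g x|) S) (h2 : IntegrableOn (fun x => g x ^ 2) S) :
    (∫ x in S, |g x|) ^ 2 ≤ (volume S).toReal * ∫ x in S, g x ^ 2 := by
  set m := (volume S).toReal with hm
  set X := ∫ x in S, |g x| with hX
  set B := ∫ x in S, g x ^ 2 with hB
  have hm0 : 0 ≤ m := ENNReal.toReal_nonneg
  have hB0 : 0 ≤ B := setIntegral_nonneg hS fun x _ => sq_nonneg _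
  have hX0 : 0 ≤ X := setIntegral_nonneg hS fun x _ => abs_nonneg _
  have hconst : ∀ c : ℝ, IntegrableOn (fun _ : ℝ => c) S := fun c =>
    integrableOn_const hfin
  have key : ∀ c : ℝ, 0 ≤ m * (c * c) + (-2 * X) * c + B := by
    intro c
    rcases le_or_gt c 0 with hc | hc
    · nlinarith
    · have h3 : ∀ x ∈ S, 2 * c * |g x| ≤ g x ^ 2 + c ^ 2 := by
        intro x _; nlinarith [sq_nonneg (|g x| - c), sq_abs (g x)]
      have h4 : ∫ x in S, 2 * c * |g x| ≤ ∫ x in S, (g x ^ 2 + c ^ 2) :=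
        setIntegral_mono_on ((h1.const_mul _)) (h2.add (hconst _)) hS h3
      rw [MeasureTheory.integral_const_mul] at h4
      have h5 : ∫ x in S, (g x ^ 2 + c ^ 2) = B + c ^ 2 * m := by
        rw [integral_add h2 (hconst _), setIntegral_const]
        simp [mul_comm, measureReal_def, hB, hm]
      nlinarith [h4, h5]
  have hd := discrim_le_zero key
  rw [discrim] at hd
  nlinarith [hd]


private lemma abs_intervalIntegral_le (f : ℝ → ℝ) (hf : IntegrableOn f (Icc (0:ℝ) 1)) {t x : ℝ} (ht : t ∈ Icc (0:ℝ) 1)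
    (hx : x ∈ Icc (0:ℝ) 1) {J : Set ℝ} (hJ : MeasurableSet J) (hsub : Icc (min t x) (max t x) ⊆ J)
    (hJsub : J ⊆ Icc (0:ℝ) 1) :
    |∫ s in t..x, f s| ≤ ∫ s in J, |f s| := by
  have hfJ : IntegrableOn (fun s => |f s|) J := (hf.mono_set hJsub).abs
  rcases le_total t x with h | h
  · calc |∫ s in t..x, f s| ≤ ∫ s in t..x, |f s| :=
          intervalIntegral.abs_integral_le_integral_abs h
      _ = ∫ s in Ioc t x, |f s| := intervalIntegral.integral_of_le h
      _ ≤ ∫ s in J, |f s| := by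
          refine setIntegral_mono_set hfJ (Filter.Eventually.of_forall fun s => abs_nonneg _) ?_
          refine Filter.Eventually.of_forall fun s hs => ?_
          exact hsub (Icc_subset_Icc (min_le_left t x) (le_max_right t x)
            (Ioc_subset_Icc_self hs))
  · rw [intervalIntegral.integral_symm, abs_neg]
    calc |∫ s in x..t, f s| ≤ ∫ s in x..t, |f s| :=
          intervalIntegral.abs_integral_le_integral_abs h
      _ = ∫ s in Ioc x t, |f s| := intervalIntegral.integral_of_le h
      _ ≤ ∫ s in J, |f s| := by
          refine setIntegral_mono_set hfJ (Filter.Eventually.of_forall fun s => abs_nonneg _) ?_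
          refine Filter.Eventually.of_forall fun s hs => ?_
          exact hsub (Icc_subset_Icc (min_le_right t x) (le_max_left t x)
            (Ioc_subset_Icc_self hs))


lemma IsTest.contOn (hT : IsTest y g) : ContinuousOn y (Icc (0:ℝ) 1) := by
  have h1 : ContinuousOn (fun x => ∫ t in Ioc (0:ℝ) x, g t) (Icc (0:ℝ) 1) :=
    intervalIntegral.continuousOn_primitive hT.2.1
  have h : ContinuousOn (fun x => y 0 + ∫ t in Ioc (0:ℝ) x, g t) (Icc (0:ℝ) 1) :=
    continuousOn_const.add h1
  refine ContinuousOn.congr h fun x hx => ?_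
  rw [hT.1 x hx, intervalIntegral.integral_of_le hx.1]

lemma IsTest.bound (hT : IsTest y g) : ∃ C : ℝ, 0 ≤ C ∧ ∀ x ∈ Icc (0:ℝ) 1, |y x| ≤ C := by
  obtain ⟨C, hC⟩ := (isCompact_Icc).exists_bound_of_continuousOn hT.contOn
  exact ⟨max C 0, le_max_right _ _, fun x hx => (hC x hx).trans (le_max_left _ _)⟩

lemma IsTest.intOn_sq (hT : IsTest y g) : IntegrableOn (fun x => (y x) ^ 2) (Icc (0:ℝ) 1) :=
  (hT.contOn.pow 2).integrableOn_Icc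

lemma IsTest.intOn_pow4 (hT : IsTest y g) : IntegrableOn (fun x => ((y x) ^ 2) ^ 2) (Icc (0:ℝ) 1) :=
  (((hT.contOn.pow 2)).pow 2).integrableOn_Icc

/-- multiply an integrable function by a test function. -/
lemma IsTest.intOn_mul {f : ℝ → ℝ} (hT : IsTest y g) (hf : IntegrableOn f (Icc (0:ℝ) 1)) :
    IntegrableOn (fun x => y x * f x) (Icc (0:ℝ) 1) := by
  obtain ⟨C, hC0, hC⟩ := hT.bound
  refine Integrable.mono' (hf.norm.const_mul C) ((hT.contOn.aestronglyMeasurable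
    measurableSet_Icc).mul hf.1) ?_
  refine (ae_restrict_iff' measurableSet_Icc).2 (Filter.Eventually.of_forall fun x hx => ?_)
  rw [norm_mul]
  have : ‖y x‖ ≤ C := hC x hx
  have h2 : (0:ℝ) ≤ ‖f x‖ := norm_nonneg _
  calc ‖y x‖ * ‖f x‖ ≤ C * ‖f x‖ := by gcongr
  _ = C * ‖f x‖ := rfl

lemma IsTest.intOn_mul_sq {f : ℝ → ℝ} (hT : IsTest y g) (hf : IntegrableOn f (Icc (0:ℝ) 1)) :
    IntegrableOn (fun x => f x * (y x) ^ 2) (Icc (0:ℝ) 1) := by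
  obtain ⟨C, hC0, hC⟩ := hT.bound
  refine Integrable.mono' (hf.norm.const_mul (C ^ 2)) (hf.1.mul
    ((hT.contOn.pow 2).aestronglyMeasurable measurableSet_Icc)) ?_
  refine (ae_restrict_iff' measurableSet_Icc).2 (Filter.Eventually.of_forall fun x hx => ?_)
  rw [norm_mul, mul_comm ‖f x‖]
  have h1 : ‖(y x) ^ 2‖ ≤ C ^ 2 := by
    rw [norm_pow]
    have := hC x hx
    have := abs_nonneg (y x)
    rw [Real.norm_eq_abs]
    nlinarith
  have h2 : (0:ℝ) ≤ ‖f x‖ := norm_nonneg _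
  exact mul_le_mul_of_nonneg_right h1 h2

lemma IsTest.sobolev (hT : IsTest y g) {d : ℝ} (hd0 : 0 < d) (hd1 : d ≤ 1) {x : ℝ}
    (hx : x ∈ Icc (0:ℝ) 1) :
    (y x) ^ 2 ≤ (2 / d) * (∫ t in (0:ℝ)..1, (y t) ^ 2) + 2 * d * (∫ t in (0:ℝ)..1, (g t) ^ 2) := by
  set A := ∫ t in (0:ℝ)..1, (y t) ^ 2 with hA
  set B := ∫ t in (0:ℝ)..1, (g t) ^ 2 with hB
  set c := min x (1 - d) with hc
  have hc0 : 0 ≤ c := le_min hx.1 (by linarith)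
  have hcx : c ≤ x := min_le_left _ _
  have hxc : x ≤ c + d := by
    rcases min_cases x (1 - d) with ⟨h1, h2⟩ | ⟨h1, h2⟩
    · rw [hc, h1]; linarith
    · rw [hc, h1]; linarith [hx.2]
  have hc1 : c + d ≤ 1 := by
    have : c ≤ 1 - d := min_le_right _ _
    linarith
  set J := Icc c (c + d) with hJ
  have hJsub : J ⊆ Icc (0:ℝ) 1 := Icc_subset_Icc hc0 hc1
  have hJm : MeasurableSet J := measurableSet_Icc
  have hvolJ : (volume J).toReal = d := by
    rw [hJ, Real.volume_Icc, add_sub_cancel_left, ENNReal.toReal_ofReal hd0.le]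
  have hvolJne : volume J ≠ ⊤ := by rw [hJ, Real.volume_Icc]; exact ENNReal.ofReal_ne_top
  have hgJ : IntegrableOn g J := hT.2.1.mono_set hJsub
  have hg2J : IntegrableOn (fun t => (g t) ^ 2) J := hT.2.2.mono_set hJsub
  have hy2J : IntegrableOn (fun t => (y t) ^ 2) J := hT.intOn_sq.mono_set hJsub
  -- B and A as Icc integrals, nonneg
  have hBIcc : B = ∫ t in Icc (0:ℝ) 1, (g t) ^ 2 := by
    rw [hB, int01, integral_Icc_eq_integral_Ioc]
  have hAIcc : A = ∫ t in Icc (0:ℝ) 1, (y t) ^ 2 := by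
    rw [hA, int01, integral_Icc_eq_integral_Ioc]
  have hB0 : 0 ≤ B := by
    rw [hBIcc]; exact setIntegral_nonneg measurableSet_Icc fun t _ => sq_nonneg _
  have hA0 : 0 ≤ A := by
    rw [hAIcc]; exact setIntegral_nonneg measurableSet_Icc fun t _ => sq_nonneg _
  have hJB : ∫ t in J, (g t) ^ 2 ≤ B := by
    rw [hBIcc]
    exact setIntegral_mono_set hT.2.2 (Filter.Eventually.of_forall fun t => sq_nonneg _)
      (Filter.Eventually.of_forall fun t ht => hJsub ht)
  have hJA : ∫ t in J, (y t) ^ 2 ≤ A := by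
    rw [hAIcc]
    exact setIntegral_mono_set hT.intOn_sq (Filter.Eventually.of_forall fun t => sq_nonneg _)
      (Filter.Eventually.of_forall fun t ht => hJsub ht)
  set K := ∫ t in J, |g t| with hK
  have hK0 : 0 ≤ K := setIntegral_nonneg hJm fun t _ => abs_nonneg _
  have hK2 : K ^ 2 ≤ d * B := by
    calc K ^ 2 ≤ (volume J).toReal * ∫ t in J, (g t) ^ 2 := cs_lemma hJm hvolJne hgJ.abs hg2J
      _ = d * ∫ t in J, (g t) ^ 2 := by rw [hvolJ]
      _ ≤ d * B := by exact mul_le_mul_of_nonneg_left hJB (le_of_lt hd0)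
  -- pointwise: for t in J, (y x)^2 ≤ 2 (y t)^2 + 2 * K^2
  have hpt : ∀ t ∈ J, (y x) ^ 2 ≤ 2 * (y t) ^ 2 + 2 * K ^ 2 := by
    intro t ht
    have htI : t ∈ Icc (0:ℝ) 1 := hJsub ht
    have hdiff : y x - y t = ∫ s in t..x, g s := by
      rw [hT.1 x hx, hT.1 t htI]
      have hItx : IntervalIntegrable g volume 0 x := by
        rw [intervalIntegrable_iff_integrableOn_Ioc_of_le hx.1]
        exact hT.2.1.mono_set (Ioc_subset_Icc_self.trans (Icc_subset_Icc le_rfl hx.2))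
      have hItt : IntervalIntegrable g volume 0 t := by
        rw [intervalIntegrable_iff_integrableOn_Ioc_of_le htI.1]
        exact hT.2.1.mono_set (Ioc_subset_Icc_self.trans (Icc_subset_Icc le_rfl htI.2))
      rw [add_sub_add_left_eq_sub]
      exact intervalIntegral.integral_interval_sub_left hItx hItt
    have habs : |y x - y t| ≤ K := by
      rw [hdiff]
      refine abs_intervalIntegral_le g hT.2.1 htI hx hJm ?_ hJsub
      intro s hs
      constructor
      · exact le_trans (le_min ht.1 hcx) hs.1
      · exact le_trans hs.2 (max_le ht.2 hxc)
    have h1 : (y x - y t) ^ 2 ≤ K ^ 2 := by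
      rw [← sq_abs (y x - y t)]
      exact pow_le_pow_left₀ (abs_nonneg _) habs 2
    nlinarith [h1, sq_nonneg (2 * y t - y x)]
  -- integrate over J
  have hint : d * (y x) ^ 2 ≤ 2 * (∫ t in J, (y t) ^ 2) + 2 * K ^ 2 * d := by
    have hconst : IntegrableOn (fun _ : ℝ => (y x) ^ 2) J :=
      integrableOn_const hvolJne
    have hrhsint : IntegrableOn (fun t => 2 * (y t) ^ 2 + 2 * K ^ 2) J :=
      (hy2J.const_mul 2).add (integrableOn_const hvolJne)
    have := setIntegral_mono_on hconst hrhsint hJm hpt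
    rw [setIntegral_const] at this
    rw [integral_add (hy2J.const_mul 2) (integrableOn_const hvolJne)] at this
    rw [MeasureTheory.integral_const_mul, setIntegral_const] at this
    rw [measureReal_def, hvolJ] at this
    simp only [smul_eq_mul] at this
    nlinarith [this]
  have hJA2 : ∫ t in J, (y t) ^ 2 ≤ A := hJA
  have hd' : d * (y x) ^ 2 ≤ 2 * A + 2 * d * B * d := by
    nlinarith [hint, hJA2, hK2, mul_le_mul_of_nonneg_right hK2 hd0.le]
  rw [div_mul_eq_mul_div, ← sub_nonneg]
  have h2 : 2 * A / d + 2 * d * B - (y x) ^ 2 = (2 * A + 2 * d * B * d - d * (y x) ^ 2) / d := by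
    field_simp
    try ring
  rw [h2]
  exact div_nonneg (by linarith) hd0.le


private lemma primitive_sq {g : ℝ → ℝ} (hg : IntegrableOn g (Icc (0:ℝ) 1)) {x : ℝ}
    (hx : x ∈ Icc (0:ℝ) 1) :
    (∫ t in (0:ℝ)..x, g t) ^ 2 = 2 * ∫ t in (0:ℝ)..x, g t * ∫ s in (0:ℝ)..t, g s := by
  set J := Ioc (0:ℝ) x with hJ
  have hJm : MeasurableSet J := measurableSet_Ioc
  have hJsub : J ⊆ Icc (0:ℝ) 1 := fun t ht => ⟨ht.1.le, ht.2.trans hx.2⟩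
  have hgJ : IntegrableOn g J := hg.mono_set hJsub
  set φ := J.indicator g with hφdef
  have hφ : Integrable φ := (integrable_indicator_iff hJm).2 hgJ
  set F := fun t : ℝ => ∫ s in Ioc (0:ℝ) t, g s with hFdef
  -- F is bounded on Icc 0 1
  have hFc : ContinuousOn F (Icc (0:ℝ) 1) := intervalIntegral.continuousOn_primitive hg
  obtain ⟨C, hC⟩ := isCompact_Icc.exists_bound_of_continuousOn hFc
  have hFgJ : IntegrableOn (fun s => g s * F s) J := by
    refine Integrable.mono' (hgJ.norm.const_mul C) (hgJ.1.mul
      ((hFc.mono hJsub).aestronglyMeasurable hJm)) ?_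
    refine (ae_restrict_iff' hJm).2 (Filter.Eventually.of_forall fun s hs => ?_)
    rw [norm_mul, mul_comm]
    have h1 : ‖F s‖ ≤ C := hC s (hJsub hs)
    have h2 : (0:ℝ) ≤ ‖g s‖ := norm_nonneg _
    exact mul_le_mul_of_nonneg_right h1 h2
  set f : ℝ → ℝ → ℝ := fun t s => if s ≤ t then φ t * φ s else 0 with hfdef
  have hfint : Integrable (Function.uncurry f) (volume.prod volume) := by
    have h1 : Integrable (fun p : ℝ × ℝ => φ p.1 * φ p.2) (volume.prod volume) :=
      hφ.mul_prod hφ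
    have h2 : Function.uncurry f =
        Set.indicator {p : ℝ × ℝ | p.2 ≤ p.1} (fun p => φ p.1 * φ p.2) := by
      funext p
      by_cases h : p.2 ≤ p.1
      · simp [Function.uncurry, hfdef, h, Set.indicator_of_mem, Set.mem_setOf_eq]
      · simp [Function.uncurry, hfdef, h, Set.indicator_of_notMem, Set.mem_setOf_eq]
    rw [h2]
    exact h1.indicator (measurableSet_le measurable_snd measurable_fst)
  -- first iterated integral
  have inner1 : ∀ t : ℝ, (∫ s, f t s) = φ t * ∫ s in Iic t ∩ J, g s := by
    intro t
    have h1 : (fun s => f t s) = (Iic t).indicator (fun s => φ t * φ s) := by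
      funext s
      by_cases h : s ≤ t
      · simp [hfdef, h, Set.indicator_of_mem, mem_Iic]
      · simp [hfdef, h, Set.indicator_of_notMem, mem_Iic]
    rw [h1, integral_indicator measurableSet_Iic, MeasureTheory.integral_const_mul,
      setIntegral_indicator hJm]
  have iter1 : (∫ t, ∫ s, f t s) = ∫ t in J, g t * F t := by
    have h1 : (fun t => ∫ s, f t s) = J.indicator (fun t => g t * ∫ s in Iic t ∩ J, g s) := by
      funext t
      rw [inner1 t]
      by_cases h : t ∈ J
      · rw [Set.indicator_of_mem h, hφdef, Set.indicator_of_mem h]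
      · rw [Set.indicator_of_notMem h, hφdef, Set.indicator_of_notMem h, zero_mul]
    rw [h1, integral_indicator hJm]
    refine setIntegral_congr_fun hJm fun t ht => ?_
    have h2 : Iic t ∩ J = Ioc 0 t := by
      ext s
      simp only [mem_inter_iff, mem_Iic, hJ, mem_Ioc]
      constructor
      · rintro ⟨h1', h2', _⟩; exact ⟨h2', h1'⟩
      · rintro ⟨h1', h2'⟩; exact ⟨h2', h1', h2'.trans ht.2⟩
    rw [h2]
  -- second iterated integral
  have inner2 : ∀ s : ℝ, (∫ t, f t s) = (∫ t in Ici s ∩ J, g t) * φ s := by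
    intro s
    have h1 : (fun t => f t s) = (Ici s).indicator (fun t => φ t * φ s) := by
      funext t
      by_cases h : s ≤ t
      · simp [hfdef, h, Set.indicator_of_mem, mem_Ici]
      · simp [hfdef, h, Set.indicator_of_notMem, mem_Ici]
    rw [h1, integral_indicator measurableSet_Ici, MeasureTheory.integral_mul_const,
      setIntegral_indicator hJm]
  have iter2 : (∫ s, ∫ t, f t s) = ∫ s in J, (F x - F s) * g s := by
    have h1 : (fun s => ∫ t, f t s) = J.indicator (fun s => (∫ t in Ici s ∩ J, g t) * g s) := by
      funext s
      rw [inner2 s]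
      by_cases h : s ∈ J
      · rw [Set.indicator_of_mem h, hφdef, Set.indicator_of_mem h]
      · rw [Set.indicator_of_notMem h, hφdef, Set.indicator_of_notMem h, mul_zero]
    rw [h1, integral_indicator hJm]
    refine setIntegral_congr_fun hJm fun s hs => ?_
    have h2 : Ici s ∩ J = Icc s x := by
      ext t
      simp only [mem_inter_iff, mem_Ici, hJ, mem_Ioc, mem_Icc]
      constructor
      · rintro ⟨h1', h2', h3'⟩; exact ⟨h1', h3'⟩
      · rintro ⟨h1', h2'⟩; exact ⟨h1', hs.1.trans_le h1', h2'⟩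
    have hI0x : IntervalIntegrable g volume 0 x := by
      rw [intervalIntegrable_iff_integrableOn_Ioc_of_le hx.1]
      exact hgJ
    have hI0s : IntervalIntegrable g volume 0 s := by
      rw [intervalIntegrable_iff_integrableOn_Ioc_of_le hs.1.le]
      exact hg.mono_set fun u hu => ⟨hu.1.le, (hu.2.trans hs.2).trans hx.2⟩
    have h3 : ∫ t in Icc s x, g t = F x - F s := by
      rw [integral_Icc_eq_integral_Ioc]
      have h4 : ∫ t in Ioc s x, g t = ∫ t in s..x, g t :=
        (intervalIntegral.integral_of_le hs.2).symm
      rw [h4, hFdef]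
      simp only
      rw [← intervalIntegral.integral_of_le hx.1, ← intervalIntegral.integral_of_le hs.1.le]
      exact (intervalIntegral.integral_interval_sub_left hI0x hI0s).symm
    rw [h2, h3]
  -- combine
  have hswap : (∫ t, ∫ s, f t s) = ∫ s, ∫ t, f t s := integral_integral_swap hfint
  have key : (∫ t in J, g t * F t) = F x * F x - ∫ s in J, g s * F s := by
    have h5 : (∫ s in J, (F x - F s) * g s) = F x * F x - ∫ s in J, g s * F s := by
      have h6 : ∀ s ∈ J, (F x - F s) * g s = F x * g s - g s * F s := by
        intro s _; ring
      rw [setIntegral_congr_fun hJm h6, integral_sub (hgJ.const_mul (F x)) hFgJ,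
        MeasureTheory.integral_const_mul]
    calc (∫ t in J, g t * F t) = ∫ (t : ℝ), ∫ (s : ℝ), f t s := iter1.symm
      _ = ∫ (s : ℝ), ∫ (t : ℝ), f t s := hswap
      _ = ∫ s in J, (F x - F s) * g s := iter2
      _ = F x * F x - ∫ s in J, g s * F s := h5
  have hLHS : (∫ t in (0:ℝ)..x, g t) = F x := intervalIntegral.integral_of_le hx.1
  have hRHS : (∫ t in (0:ℝ)..x, g t * ∫ s in (0:ℝ)..t, g s) = ∫ t in J, g t * F t := by
    rw [intervalIntegral.integral_of_le hx.1]
    refine setIntegral_congr_fun hJm fun t ht => ?_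
    rw [intervalIntegral.integral_of_le ht.1.le]
  rw [hLHS, hRHS]
  nlinarith [key]

lemma IsTest.const_mul {y g : ℝ → ℝ} (hT : IsTest y g) (c : ℝ) :
    IsTest (fun x => c * y x) (fun x => c * g x) := by
  refine ⟨fun x hx => ?_, hT.2.1.const_mul c, ?_⟩
  · show c * y x = c * y 0 + ∫ t in (0:ℝ)..x, c * g t
    rw [hT.1 x hx, intervalIntegral.integral_const_mul]
    ring
  · have h : (fun x => (c * g x) ^ 2) = fun x => c ^ 2 * (g x) ^ 2 := by
      funext x; ring
    rw [h]
    exact hT.2.2.const_mul _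

lemma IsTest.neg {y g : ℝ → ℝ} (hT : IsTest y g) :
    IsTest (fun x => -(y x)) (fun x => -(g x)) := by
  have h := hT.const_mul (-1)
  simpa using h

lemma IsTest.sq {y g : ℝ → ℝ} (hT : IsTest y g) :
    IsTest (fun x => (y x) ^ 2) (fun x => 2 * y x * g x) := by
  have h2yg : IntegrableOn (fun x => 2 * y x * g x) (Icc (0:ℝ) 1) := by
    have h := (hT.intOn_mul hT.2.1).const_mul 2
    refine IntegrableOn.congr_fun h (fun x _ => by ring) measurableSet_Icc
  refine ⟨fun x hx => ?_, h2yg, ?_⟩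
  · show (y x) ^ 2 = (y 0) ^ 2 + ∫ t in (0:ℝ)..x, 2 * y t * g t
    set P := fun t : ℝ => ∫ s in (0:ℝ)..t, g s with hP
    have hyx : y x = y 0 + P x := hT.1 x hx
    have hform : ∫ t in (0:ℝ)..x, 2 * y t * g t
        = 2 * y 0 * (∫ t in (0:ℝ)..x, g t) + 2 * ∫ t in (0:ℝ)..x, g t * P t := by
      have hJm : MeasurableSet (Ioc (0:ℝ) x) := measurableSet_Ioc
      have hsub : Ioc (0:ℝ) x ⊆ Icc (0:ℝ) 1 := fun t ht => ⟨ht.1.le, ht.2.trans hx.2⟩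
      rw [intervalIntegral.integral_of_le hx.1, intervalIntegral.integral_of_le hx.1,
        intervalIntegral.integral_of_le hx.1]
      have hcong : ∀ t ∈ Ioc (0:ℝ) x,
          2 * y t * g t = 2 * y 0 * g t + 2 * (g t * P t) := by
        intro t ht
        rw [hT.1 t (hsub ht)]
        ring
      rw [setIntegral_congr_fun hJm hcong]
      have hgJ : IntegrableOn g (Ioc (0:ℝ) x) := hT.2.1.mono_set hsub
      have hPc : ContinuousOn P (Icc (0:ℝ) 1) := by
        have h := intervalIntegral.continuousOn_primitive (f := g) (μ := volume) hT.2.1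
        refine h.congr fun t ht => ?_
        show (∫ s in (0:ℝ)..t, g s) = ∫ s in Ioc (0:ℝ) t, g s
        exact intervalIntegral.integral_of_le ht.1
      obtain ⟨C, hC⟩ := isCompact_Icc.exists_bound_of_continuousOn hPc
      have hgPJ : IntegrableOn (fun t => g t * P t) (Ioc (0:ℝ) x) := by
        refine Integrable.mono' (hgJ.norm.const_mul C) (hgJ.1.mul
          ((hPc.mono hsub).aestronglyMeasurable hJm)) ?_
        refine (ae_restrict_iff' hJm).2 (Filter.Eventually.of_forall fun s hs => ?_)
        rw [norm_mul, mul_comm]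
        exact mul_le_mul_of_nonneg_right (hC s (hsub hs)) (norm_nonneg _)
      rw [integral_add (hgJ.const_mul _) (hgPJ.const_mul 2),
        MeasureTheory.integral_const_mul, MeasureTheory.integral_const_mul]
    have hprim : (P x) ^ 2 = 2 * ∫ t in (0:ℝ)..x, g t * P t := by
      have h := primitive_sq hT.2.1 hx
      rw [hP]
      convert h using 3
    rw [hform, hyx]
    have hy0 : y 0 = y 0 + P 0 := by
      have := hT.1 0 (by constructor <;> norm_num)
      rw [hP]
      simpa using this
    have hP0 : P 0 = 0 := by rw [hP]; simp
    nlinarith [hprim, hP0]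
  · obtain ⟨C, hC0, hC⟩ := hT.bound
    have hy : AEStronglyMeasurable y (volume.restrict (Icc (0:ℝ) 1)) :=
      hT.contOn.aestronglyMeasurable measurableSet_Icc
    have hgm : AEStronglyMeasurable g (volume.restrict (Icc (0:ℝ) 1)) := hT.2.1.1
    have hprod : AEStronglyMeasurable (fun x => 2 * y x * g x)
        (volume.restrict (Icc (0:ℝ) 1)) := (hy.const_mul 2).mul hgm
    have hmeas : AEStronglyMeasurable (fun x => (2 * y x * g x) ^ 2)
        (volume.restrict (Icc (0:ℝ) 1)) := by
      have := hprod.mul hprod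
      refine this.congr (Filter.Eventually.of_forall fun x => ?_)
      simp only [Pi.mul_apply]
      ring
    refine Integrable.mono' (hT.2.2.const_mul (4 * C ^ 2)) hmeas ?_
    refine (ae_restrict_iff' measurableSet_Icc).2 (Filter.Eventually.of_forall fun s hs => ?_)
    rw [Real.norm_eq_abs, abs_of_nonneg (sq_nonneg _)]
    have h1 : |y s| ≤ C := hC s hs
    have h2 : |y s| * |y s| ≤ C * C := mul_self_le_mul_self (abs_nonneg _) h1
    show (2 * y s * g s) ^ 2 ≤ 4 * C ^ 2 * g s ^ 2
    nlinarith [sq_nonneg (g s), h2, sq_abs (y s)]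


private lemma II01 {f : ℝ → ℝ} (hf : IntegrableOn f (Icc (0:ℝ) 1)) :
    IntervalIntegrable f volume 0 1 :=
  (intervalIntegrable_iff_integrableOn_Ioc_of_le zero_le_one).2 (hf.mono_set Ioc_subset_Icc_self)

private lemma int01_nonneg {f : ℝ → ℝ} (h : ∀ x ∈ Ioc (0:ℝ) 1, 0 ≤ f x) :
    0 ≤ ∫ x in (0:ℝ)..1, f x := by
  rw [int01]
  exact setIntegral_nonneg measurableSet_Ioc h

private lemma int01_mono {f g : ℝ → ℝ} (hf : IntegrableOn f (Icc (0:ℝ) 1))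
    (hg : IntegrableOn g (Icc (0:ℝ) 1)) (h : ∀ x ∈ Ioc (0:ℝ) 1, f x ≤ g x) :
    (∫ x in (0:ℝ)..1, f x) ≤ ∫ x in (0:ℝ)..1, g x := by
  rw [int01 f, int01 g]
  exact setIntegral_mono_on (hf.mono_set Ioc_subset_Icc_self)
    (hg.mono_set Ioc_subset_Icc_self) measurableSet_Ioc h

/-- The set defining `normNeg`. -/
def NSet (p : ℝ → ℝ) : Set ℝ :=
  { r : ℝ | ∃ z h : ℝ → ℝ, IsTest z h ∧
    (∫ x in (0:ℝ)..1, ((z x) ^ 2 + (h x) ^ 2)) ≤ 1 ∧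
    r = ∫ x in (0:ℝ)..1, p x * z x }

lemma zero_mem_NSet (p : ℝ → ℝ) : (0:ℝ) ∈ NSet p := by
  refine ⟨fun _ => 0, fun _ => 0, ⟨fun x hx => by simp, ?_, ?_⟩, by norm_num, by simp⟩
  · exact (integrable_zero _ _ _).integrableOn
  · simpa using (integrable_zero _ ℝ (volume : Measure ℝ)).integrableOn

lemma NSet_bddAbove {p : ℝ → ℝ} (hp : IntegrableOn p (Icc (0:ℝ) 1)) :
    BddAbove (NSet p) := by
  refine ⟨2 * ∫ x in Icc (0:ℝ) 1, |p x|, fun r hr => ?_⟩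
  obtain ⟨z, h, hT, hcon, hr⟩ := hr
  -- split the constraint
  have hAz : 0 ≤ ∫ x in (0:ℝ)..1, (z x) ^ 2 := int01_nonneg fun x _ => sq_nonneg _
  have hBz : 0 ≤ ∫ x in (0:ℝ)..1, (h x) ^ 2 := int01_nonneg fun x _ => sq_nonneg _
  have hsplit : (∫ x in (0:ℝ)..1, ((z x) ^ 2 + (h x) ^ 2))
      = (∫ x in (0:ℝ)..1, (z x) ^ 2) + ∫ x in (0:ℝ)..1, (h x) ^ 2 :=
    intervalIntegral.integral_add (II01 hT.intOn_sq) (II01 hT.2.2)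
  have hzb : ∀ x ∈ Icc (0:ℝ) 1, |z x| ≤ 2 := by
    intro x hx
    have hs := hT.sobolev one_pos le_rfl hx
    have h1 : (z x) ^ 2 ≤ 4 := by
      rw [hsplit] at hcon
      nlinarith [hs, hAz, hBz]
    nlinarith [abs_nonneg (z x), sq_abs (z x), h1]
  rw [hr, int01]
  have hb : ‖∫ x in Ioc (0:ℝ) 1, p x * z x‖ ≤ ∫ x in Ioc (0:ℝ) 1, |p x| * 2 := by
    refine norm_integral_le_of_norm_le (((hp.mono_set Ioc_subset_Icc_self).abs).mul_const 2) ?_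
    refine (ae_restrict_iff' measurableSet_Ioc).2 (Filter.Eventually.of_forall fun x hx => ?_)
    rw [norm_mul, Real.norm_eq_abs, Real.norm_eq_abs]
    exact mul_le_mul_of_nonneg_left (hzb x (Ioc_subset_Icc_self hx)) (abs_nonneg _)
  have hle : (∫ x in Ioc (0:ℝ) 1, p x * z x) ≤ ∫ x in Ioc (0:ℝ) 1, |p x| * 2 :=
    le_trans (le_abs_self _) hb
  calc (∫ x in Ioc (0:ℝ) 1, p x * z x) ≤ ∫ x in Ioc (0:ℝ) 1, |p x| * 2 := hle
    _ = 2 * ∫ x in Ioc (0:ℝ) 1, |p x| := by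
        rw [MeasureTheory.integral_mul_const]; ring
    _ = 2 * ∫ x in Icc (0:ℝ) 1, |p x| := by rw [integral_Icc_eq_integral_Ioc]

lemma normNeg_eq (p : ℝ → ℝ) : normNeg p = sSup (NSet p) := rfl

lemma normNeg_nonneg {p : ℝ → ℝ} (hp : IntegrableOn p (Icc (0:ℝ) 1)) : 0 ≤ normNeg p :=
  le_csSup (NSet_bddAbove hp) (zero_mem_NSet p)

/-- The key pairing estimate: `|∫ p y²| ≤ ‖p‖₋ · 3(A+B)`. -/
lemma pairing {p y g : ℝ → ℝ} (hp : IntegrableOn p (Icc (0:ℝ) 1)) (hT : IsTest y g)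
    (hA : 0 < ∫ x in (0:ℝ)..1, (y x) ^ 2) :
    |∫ x in (0:ℝ)..1, p x * (y x) ^ 2|
      ≤ normNeg p * (3 * ((∫ x in (0:ℝ)..1, (y x) ^ 2) + ∫ x in (0:ℝ)..1, (g x) ^ 2)) := by
  set A := ∫ x in (0:ℝ)..1, (y x) ^ 2 with hAdef
  set B := ∫ x in (0:ℝ)..1, (g x) ^ 2 with hBdef
  have hB : 0 ≤ B := int01_nonneg fun x _ => sq_nonneg _
  set N := 3 * (A + B) with hNdef
  have hN : 0 < N := by rw [hNdef]; nlinarith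
  -- bound W
  have hsob : ∀ x ∈ Icc (0:ℝ) 1, (y x) ^ 2 ≤ 2 * A + 2 * B := by
    intro x hx
    have := hT.sobolev one_pos le_rfl hx
    nlinarith [this]
  have hWint : IntegrableOn (fun x => ((y x) ^ 2) ^ 2 + (2 * y x * g x) ^ 2) (Icc (0:ℝ) 1) :=
    hT.intOn_pow4.add hT.sq.2.2
  have hRint : IntegrableOn (fun x => (2 * A + 2 * B) * ((y x) ^ 2 + 4 * (g x) ^ 2))
      (Icc (0:ℝ) 1) := (hT.intOn_sq.add (hT.2.2.const_mul 4)).const_mul _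
  have hW : (∫ x in (0:ℝ)..1, (((y x) ^ 2) ^ 2 + (2 * y x * g x) ^ 2)) ≤ N ^ 2 := by
    have h1 : (∫ x in (0:ℝ)..1, (((y x) ^ 2) ^ 2 + (2 * y x * g x) ^ 2))
        ≤ ∫ x in (0:ℝ)..1, (2 * A + 2 * B) * ((y x) ^ 2 + 4 * (g x) ^ 2) := by
      refine int01_mono hWint hRint fun x hx => ?_
      have h2 := hsob x (Ioc_subset_Icc_self hx)
      nlinarith [sq_nonneg (g x), sq_nonneg (y x), sq_nonneg (y x * g x)]
    have h3 : (∫ x in (0:ℝ)..1, (2 * A + 2 * B) * ((y x) ^ 2 + 4 * (g x) ^ 2))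
        = (2 * A + 2 * B) * (A + 4 * B) := by
      rw [intervalIntegral.integral_const_mul]
      congr 1
      rw [intervalIntegral.integral_add (II01 hT.intOn_sq) ((II01 hT.2.2).const_mul 4),
        intervalIntegral.integral_const_mul]
    have hA0 : 0 < A := hA
    nlinarith [h1, h3, hA0, hB]
  -- membership of ±y²/N
  have hmem : ∀ σ : ℝ, σ = 1 ∨ σ = -1 →
      (∫ x in (0:ℝ)..1, p x * (σ / N * (y x) ^ 2)) ∈ NSet p := by
    intro σ hσ
    refine ⟨fun x => σ / N * (y x) ^ 2, fun x => σ / N * (2 * y x * g x),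
      hT.sq.const_mul (σ / N), ?_, rfl⟩
    have hcalc : ∀ x : ℝ, (σ / N * (y x) ^ 2) ^ 2 + (σ / N * (2 * y x * g x)) ^ 2
        = (σ / N) ^ 2 * (((y x) ^ 2) ^ 2 + (2 * y x * g x) ^ 2) := by
      intro x; ring
    rw [intervalIntegral.integral_congr (fun x _ => hcalc x),
      intervalIntegral.integral_const_mul]
    have hσ2 : (σ / N) ^ 2 = 1 / N ^ 2 := by
      rcases hσ with h | h <;> rw [h] <;> field_simp
    rw [hσ2]
    rw [div_mul_eq_mul_div, div_le_one (by positivity)]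
    linarith [hW]
  have hbdd := NSet_bddAbove hp
  have hp1 := le_csSup hbdd (hmem 1 (Or.inl rfl))
  have hp2 := le_csSup hbdd (hmem (-1) (Or.inr rfl))
  have hpull : ∀ σ : ℝ, (∫ x in (0:ℝ)..1, p x * (σ / N * (y x) ^ 2))
      = σ / N * ∫ x in (0:ℝ)..1, p x * (y x) ^ 2 := by
    intro σ
    rw [← intervalIntegral.integral_const_mul]
    refine intervalIntegral.integral_congr fun x _ => ?_
    ring
  rw [hpull] at hp1 hp2
  rw [← normNeg_eq] at hp1 hp2
  set X := ∫ x in (0:ℝ)..1, p x * (y x) ^ 2 with hXdef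
  have e1 : 1 / N * X * N = X := by field_simp
  have e2 : -1 / N * X * N = -X := by field_simp
  have f1 := mul_le_mul_of_nonneg_right hp1 hN.le
  have f2 := mul_le_mul_of_nonneg_right hp2 hN.le
  rw [e1] at f1
  rw [e2] at f2
  rw [abs_le]
  constructor <;> linarith


/-- Splitting the Rayleigh numerator integral. -/
lemma num_split {q y g : ℝ → ℝ} (hq : IntegrableOn q (Icc (0:ℝ) 1)) (hT : IsTest y g) :
    (∫ x in (0:ℝ)..1, ((g x) ^ 2 + q x * (y x) ^ 2))
      = (∫ x in (0:ℝ)..1, (g x) ^ 2) + ∫ x in (0:ℝ)..1, q x * (y x) ^ 2 :=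
  intervalIntegral.integral_add (II01 hT.2.2) (II01 (hT.intOn_mul_sq hq))

/-- `∫ q' y² = ∫ q y² + ∫ (q'-q) y²`. -/
lemma qy2_split {q q' y g : ℝ → ℝ} (hq : IntegrableOn q (Icc (0:ℝ) 1))
    (hq' : IntegrableOn q' (Icc (0:ℝ) 1)) (hT : IsTest y g) :
    (∫ x in (0:ℝ)..1, q' x * (y x) ^ 2)
      = (∫ x in (0:ℝ)..1, q x * (y x) ^ 2)
        + ∫ x in (0:ℝ)..1, (q' x - q x) * (y x) ^ 2 := by
  have hsub : IntegrableOn (fun x => q' x - q x) (Icc (0:ℝ) 1) := hq'.sub hq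
  rw [← intervalIntegral.integral_add (II01 (hT.intOn_mul_sq hq))
    (II01 (hT.intOn_mul_sq hsub))]
  refine intervalIntegral.integral_congr fun x _ => ?_
  ring

/-- Bound `|∫ q y²| ≤ Qa (2/e A + 2 e B)`. -/
lemma qy2_bound {q y g : ℝ → ℝ} (hq : IntegrableOn q (Icc (0:ℝ) 1)) (hT : IsTest y g)
    {e : ℝ} (he0 : 0 < e) (he1 : e ≤ 1) :
    |∫ x in (0:ℝ)..1, q x * (y x) ^ 2|
      ≤ (∫ x in (0:ℝ)..1, |q x|)
        * (2 / e * (∫ x in (0:ℝ)..1, (y x) ^ 2) + 2 * e * ∫ x in (0:ℝ)..1, (g x) ^ 2) := by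
  set A := ∫ x in (0:ℝ)..1, (y x) ^ 2 with hAdef
  set B := ∫ x in (0:ℝ)..1, (g x) ^ 2 with hBdef
  have hA0 : 0 ≤ A := int01_nonneg fun x _ => sq_nonneg _
  have hB0 : 0 ≤ B := int01_nonneg fun x _ => sq_nonneg _
  set M := 2 / e * A + 2 * e * B with hMdef
  have hM0 : 0 ≤ M := by positivity
  have hb : ‖∫ x in Ioc (0:ℝ) 1, q x * (y x) ^ 2‖ ≤ ∫ x in Ioc (0:ℝ) 1, |q x| * M := by
    refine norm_integral_le_of_norm_le (((hq.mono_set Ioc_subset_Icc_self).abs).mul_const M) ?_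
    refine (ae_restrict_iff' measurableSet_Ioc).2 (Filter.Eventually.of_forall fun x hx => ?_)
    rw [norm_mul, Real.norm_eq_abs, Real.norm_eq_abs, abs_of_nonneg (sq_nonneg (y x))]
    exact mul_le_mul_of_nonneg_left (hT.sobolev he0 he1 (Ioc_subset_Icc_self hx))
      (abs_nonneg _)
  rw [int01]
  calc |∫ x in Ioc (0:ℝ) 1, q x * (y x) ^ 2| ≤ ∫ x in Ioc (0:ℝ) 1, |q x| * M := hb
    _ = (∫ x in Ioc (0:ℝ) 1, |q x|) * M := MeasureTheory.integral_mul_const _ _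
    _ = (∫ x in (0:ℝ)..1, |q x|) * M := by rw [int01]

/-- RayleighSet is nonempty. -/
lemma RayleighSet_nonempty (k0 k1 : ℝ) (q : ℝ → ℝ) : (RayleighSet k0 k1 q).Nonempty := by
  have hone : IsTest (fun _ : ℝ => (1:ℝ)) (fun _ : ℝ => (0:ℝ)) := by
    refine ⟨fun x hx => by simp, (integrable_zero _ _ _).integrableOn, ?_⟩
    simpa using (integrable_zero _ ℝ (volume : Measure ℝ)).integrableOn
  have hA : 0 < ∫ x in (0:ℝ)..1, ((fun _ : ℝ => (1:ℝ)) x) ^ 2 := by simp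
  exact ⟨_, fun _ => (1:ℝ), fun _ => (0:ℝ), hone, hA, rfl⟩

/-- Main lower bound for a perturbed Rayleigh quotient. -/
lemma num_lb {q q' y g : ℝ → ℝ} (hq : IntegrableOn q (Icc (0:ℝ) 1))
    (hq' : IntegrableOn q' (Icc (0:ℝ) 1)) {d : ℝ} (hd0 : 0 ≤ d)
    (hnn : normNeg (fun x => q' x - q x) ≤ d) (hT : IsTest y g)
    (hA : 0 < ∫ x in (0:ℝ)..1, (y x) ^ 2) {e : ℝ} (he0 : 0 < e) (he1 : e ≤ 1) :
    (∫ x in (0:ℝ)..1, ((g x) ^ 2 + q' x * (y x) ^ 2))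
      ≥ (∫ x in (0:ℝ)..1, (g x) ^ 2) * (1 - 2 * e * (∫ x in (0:ℝ)..1, |q x|) - 3 * d)
        - (2 / e * (∫ x in (0:ℝ)..1, |q x|) + 3 * d) * (∫ x in (0:ℝ)..1, (y x) ^ 2) := by
  set A := ∫ x in (0:ℝ)..1, (y x) ^ 2 with hAdef
  set B := ∫ x in (0:ℝ)..1, (g x) ^ 2 with hBdef
  set Qa := ∫ x in (0:ℝ)..1, |q x| with hQdef
  have hB0 : 0 ≤ B := int01_nonneg fun x _ => sq_nonneg _
  have hsplit := num_split hq' hT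
  have hsplit2 := qy2_split hq hq' hT
  have hqb := qy2_bound hq hT he0 he1
  have hsub : IntegrableOn (fun x => q' x - q x) (Icc (0:ℝ) 1) := hq'.sub hq
  have hpair := pairing hsub hT hA
  have hnn0 : 0 ≤ normNeg fun x => q' x - q x := normNeg_nonneg hsub
  have h3AB : (0:ℝ) ≤ 3 * (A + B) := by nlinarith [hA, hB0]
  have hpd : |∫ x in (0:ℝ)..1, (q' x - q x) * (y x) ^ 2| ≤ d * (3 * (A + B)) :=
    le_trans hpair (mul_le_mul_of_nonneg_right hnn h3AB)
  have h1 := abs_le.1 hqb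
  have h2 := abs_le.1 hpd
  rw [hsplit, hsplit2]
  nlinarith [h1.1, h2.1, hA]

/-- RayleighSet is bounded below (with explicit bound). -/
lemma RayleighSet_lb {k0 k1 : ℝ} {q : ℝ → ℝ} (hq : IntegrableOn q (Icc (0:ℝ) 1)) :
    ∀ r ∈ RayleighSet k0 k1 q,
      -(2 * (∫ x in (0:ℝ)..1, |q x|) * (2 * (∫ x in (0:ℝ)..1, |q x|) + 1)) ≤ r := by
  set Qa := ∫ x in (0:ℝ)..1, |q x| with hQdef
  have hQ0 : 0 ≤ Qa := int01_nonneg fun x _ => abs_nonneg _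
  rintro r ⟨y, g, hT, hA, hr⟩
  set A := ∫ x in (0:ℝ)..1, (y x) ^ 2 with hAdef
  set B := ∫ x in (0:ℝ)..1, (g x) ^ 2 with hBdef
  have hB0 : 0 ≤ B := int01_nonneg fun x _ => sq_nonneg _
  have hzero : normNeg (fun x => q x - q x) ≤ 0 := by
    refine Real.sSup_le (fun r' hr' => ?_) le_rfl
    obtain ⟨z, h, _, _, hr'⟩ := hr'
    rw [hr']
    have : ∀ x ∈ uIcc (0:ℝ) 1, (q x - q x) * z x = 0 := fun x _ => by ring
    rw [intervalIntegral.integral_congr this]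
    simp
  set e := 1 / (2 * Qa + 1) with hedef
  have he0 : 0 < e := by rw [hedef]; positivity
  have he1 : e ≤ 1 := by
    rw [hedef]
    rw [div_le_one (by positivity)]
    linarith
  have hlb := num_lb hq hq le_rfl hzero hT hA he0 he1
  have hee : e * (2 * Qa + 1) = 1 := by
    rw [hedef]; field_simp
  have heQ : 2 * e * Qa ≤ 1 := by nlinarith [he0.le, hQ0, hee]
  have heC : 2 / e * Qa = 2 * Qa * (2 * Qa + 1) := by
    rw [hedef]
    field_simp
  -- numerator ≥ - Cq * A
  have hnum : (∫ x in (0:ℝ)..1, ((g x) ^ 2 + q x * (y x) ^ 2))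
      ≥ -(2 * Qa * (2 * Qa + 1)) * A := by
    have h2 : B * (1 - 2 * e * Qa - 3 * 0) ≥ 0 := by nlinarith
    calc (∫ x in (0:ℝ)..1, ((g x) ^ 2 + q x * (y x) ^ 2))
        ≥ B * (1 - 2 * e * Qa - 3 * 0) - (2 / e * Qa + 3 * 0) * A := hlb
      _ ≥ -(2 * Qa * (2 * Qa + 1)) * A := by rw [heC] at *; nlinarith
  rw [hr, le_div_iff₀ hA]
  have hb0 : 0 ≤ k0 ^ 2 * (y 0) ^ 2 + k1 ^ 2 * (y 1) ^ 2 := by positivity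
  linarith [hnum]

lemma RayleighSet_bddBelow {k0 k1 : ℝ} {q : ℝ → ℝ} (hq : IntegrableOn q (Icc (0:ℝ) 1)) :
    BddBelow (RayleighSet k0 k1 q) :=
  ⟨_, fun r hr => RayleighSet_lb hq r hr⟩


lemma normNeg_qq (q : ℝ → ℝ) : normNeg (fun x => q x - q x) ≤ 0 := by
  refine Real.sSup_le (fun r' hr' => ?_) le_rfl
  obtain ⟨z, h, _, _, hr'⟩ := hr'
  rw [hr']
  have : ∀ x ∈ uIcc (0:ℝ) 1, (q x - q x) * z x = 0 := fun x _ => by ring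
  rw [intervalIntegral.integral_congr this]
  simp


private lemma arith_hnum {A B num lam C u δ : ℝ} (hA : 0 < A) (hB0 : 0 ≤ B)
    (hlb : num ≥ B * (1 - u - 3 * δ) - (C + 3 * δ) * A)
    (hu : u ≤ 1 / 2) (hδ12 : δ ≤ 1 / 12) (hδ0 : 0 ≤ δ) (hC0 : 0 ≤ C)
    (hBgt : 4 * (|lam| + C + 1) * A < B) : lam * A ≤ num := by
  have h1 : (1:ℝ) / 4 ≤ 1 - u - 3 * δ := by linarith
  have h2 := mul_le_mul_of_nonneg_left h1 hB0
  have h5 := mul_le_mul_of_nonneg_right (le_abs_self lam) hA.le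
  have h6 := mul_le_mul_of_nonneg_right hδ12 hA.le
  nlinarith [h2, h5, h6, hA.le, mul_nonneg hC0 hA.le, mul_nonneg (abs_nonneg lam) hA.le,
    mul_nonneg hδ0 hA.le]

private lemma arith_BK {A B r lam C u num bd : ℝ} (hA : 0 < A) (hB0 : 0 ≤ B) (hbd : 0 ≤ bd)
    (hlb0 : num ≥ B * (1 - u - 3 * 0) - (C + 3 * 0) * A) (hrA : r * A = num + bd)
    (hu : u ≤ 1 / 2) (hrle : r ≤ lam + 1) (hC0 : 0 ≤ C) :
    B ≤ 4 * (|lam| + C + 1) * A := by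
  have h1 : (1:ℝ) / 2 ≤ 1 - u - 3 * 0 := by linarith
  have h2 := mul_le_mul_of_nonneg_left h1 hB0
  have h3 := mul_le_mul_of_nonneg_right hrle hA.le
  have h5 := mul_le_mul_of_nonneg_right (le_abs_self lam) hA.le
  nlinarith [h2, h3, h5, mul_nonneg hC0 hA.le, mul_nonneg (abs_nonneg lam) hA.le, hA.le]

private lemma arith_num_bd {A num bd lam t : ℝ} (h : lam * A ≤ num) (hbd : 0 ≤ bd)
    (ht : 0 ≤ t) (hA : 0 < A) : (lam - t) * A ≤ num + bd := by
  nlinarith [mul_nonneg ht hA.le]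

private lemma arith_div_lb {X A B δ K : ℝ} (hA : 0 < A) (hpd : -(δ * (3 * (A + B))) ≤ X)
    (hBK : B ≤ K * A) (hδ0 : 0 ≤ δ) : -(3 * δ * (1 + K)) * A ≤ X := by
  nlinarith [hpd, mul_le_mul_of_nonneg_left hBK hδ0]

private lemma arith_div_ub {X A B δ K : ℝ} (hA : 0 < A) (hpd : X ≤ δ * (3 * (A + B)))
    (hBK : B ≤ K * A) (hδ0 : 0 ≤ δ) : X ≤ 3 * δ * (1 + K) * A := by
  nlinarith [hpd, mul_le_mul_of_nonneg_left hBK hδ0]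

end SLhelpers

set_option maxHeartbeats 1000000 in
theorem stmt10 (k0 k1 : ℝ) (hk0 : 0 ≤ k0) (hk01 : k0 ≤ k1) :
    ∀ q : ℝ → ℝ, IntegrableOn q (Icc (0:ℝ) 1) →
      ((RayleighSet k0 k1 q).Nonempty ∧ BddBelow (RayleighSet k0 k1 q)) ∧
      (∀ ε : ℝ, 0 < ε → ∃ δ : ℝ, 0 < δ ∧
        ∀ q' : ℝ → ℝ, IntegrableOn q' (Icc (0:ℝ) 1) →
          normNeg (fun x => q' x - q x) < δ →
          |lam1 k0 k1 q' - lam1 k0 k1 q| < ε) := by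
  intro q hq
  refine ⟨⟨RayleighSet_nonempty k0 k1 q, RayleighSet_bddBelow hq⟩, ?_⟩
  intro ε hε
  set Qa := ∫ x in (0:ℝ)..1, |q x| with hQdef
  have hQ0 : 0 ≤ Qa := int01_nonneg fun x _ => abs_nonneg _
  set e := 1 / (4 * Qa + 1) with hedef
  have he0 : 0 < e := by rw [hedef]; positivity
  have hee : e * (4 * Qa + 1) = 1 := by rw [hedef]; field_simp
  have he1 : e ≤ 1 := by nlinarith [hee, hQ0, he0.le]
  have heQ : 2 * e * Qa ≤ 1 / 2 := by nlinarith [hee, hQ0, he0.le]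
  have hCq0 : 0 ≤ 2 / e * Qa := by positivity
  set lam := lam1 k0 k1 q with hlamdef
  set K := 4 * (|lam| + 2 / e * Qa + 1) with hKdef
  have hK0 : 0 < K := by rw [hKdef]; positivity
  set δ := min (1/12 : ℝ) (ε / (24 * (1 + K))) with hδdef
  have hδ0 : 0 < δ := lt_min (by norm_num) (by positivity)
  have hδ12 : δ ≤ 1/12 := min_le_left _ _
  have hδε : 3 * δ * (1 + K) ≤ ε / 8 := by
    have h1 : δ ≤ ε / (24 * (1 + K)) := min_le_right _ _
    have h4 : δ * (3 * (1 + K)) ≤ (ε / (24 * (1 + K))) * (3 * (1 + K)) :=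
      mul_le_mul_of_nonneg_right h1 (by positivity)
    have h5 : (ε / (24 * (1 + K))) * (3 * (1 + K)) = ε / 8 := by
      field_simp
      ring
    calc 3 * δ * (1 + K) = δ * (3 * (1 + K)) := by ring
      _ ≤ ε / 8 := by rw [h5] at h4; exact h4
  refine ⟨δ, hδ0, fun q' hq' hnnlt => ?_⟩
  have hnn : normNeg (fun x => q' x - q x) ≤ δ := hnnlt.le
  have hsub : IntegrableOn (fun x => q' x - q x) (Icc (0:ℝ) 1) := hq'.sub hq
  -- LOWER BOUND
  have hlow : ∀ r' ∈ RayleighSet k0 k1 q', lam - 3 * δ * (1 + K) ≤ r' := by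
    rintro r' ⟨y, g, hT, hA, hr'⟩
    set A := ∫ x in (0:ℝ)..1, (y x) ^ 2 with hAdef
    set B := ∫ x in (0:ℝ)..1, (g x) ^ 2 with hBdef
    have hB0 : 0 ≤ B := int01_nonneg fun x _ => sq_nonneg _
    have hb0 : 0 ≤ k0 ^ 2 * (y 0) ^ 2 + k1 ^ 2 * (y 1) ^ 2 := by positivity
    have h3AB : (0:ℝ) ≤ 3 * (A + B) := by linarith only [hA, hB0]
    have hpd : |∫ x in (0:ℝ)..1, (q' x - q x) * (y x) ^ 2| ≤ δ * (3 * (A + B)) :=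
      le_trans (pairing hsub hT hA) (mul_le_mul_of_nonneg_right hnn h3AB)
    have hpd' := (abs_le.1 hpd).1
    rcases le_or_gt B (K * A) with hBle | hBgt
    · -- small derivative case: compare with the quotient for q
      set rq := ((∫ x in (0:ℝ)..1, ((g x) ^ 2 + q x * (y x) ^ 2))
          + k0 ^ 2 * (y 0) ^ 2 + k1 ^ 2 * (y 1) ^ 2) / A with hrq
      have hmemq : rq ∈ RayleighSet k0 k1 q := ⟨y, g, hT, hA, rfl⟩
      have hlamle : lam ≤ rq := csInf_le (RayleighSet_bddBelow hq) hmemq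
      have e1 : (∫ x in (0:ℝ)..1, ((g x) ^ 2 + q' x * (y x) ^ 2))
          + k0 ^ 2 * (y 0) ^ 2 + k1 ^ 2 * (y 1) ^ 2
          = ((∫ x in (0:ℝ)..1, ((g x) ^ 2 + q x * (y x) ^ 2))
          + k0 ^ 2 * (y 0) ^ 2 + k1 ^ 2 * (y 1) ^ 2)
            + ∫ x in (0:ℝ)..1, (q' x - q x) * (y x) ^ 2 := by
        rw [num_split hq' hT, num_split hq hT, qy2_split hq hq' hT]
        ring
      have hr'eq : r' = rq + (∫ x in (0:ℝ)..1, (q' x - q x) * (y x) ^ 2) / A := by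
        rw [hr', e1, add_div, hrq]
      have hdiv : -(3 * δ * (1 + K)) * A ≤ ∫ x in (0:ℝ)..1, (q' x - q x) * (y x) ^ 2 :=
        arith_div_lb hA hpd' hBle hδ0.le
      have hdiv' : -(3 * δ * (1 + K)) ≤ (∫ x in (0:ℝ)..1, (q' x - q x) * (y x) ^ 2) / A := by
        rw [le_div_iff₀ hA]
        exact hdiv
      rw [hr'eq]
      linarith only [hlamle, hdiv']
    · -- large derivative case: quotient is large anyway
      have hlb := num_lb hq hq' hδ0.le hnn hT hA he0 he1
      rw [hKdef] at hBgt
      have heQ' : 2 * e * (∫ x in (0:ℝ)..1, |q x|) ≤ 1 / 2 := heQ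
      have hCq0' : 0 ≤ 2 / e * (∫ x in (0:ℝ)..1, |q x|) := hCq0
      have hnum : lam * A ≤ (∫ x in (0:ℝ)..1, ((g x) ^ 2 + q' x * (y x) ^ 2)) :=
        arith_hnum hA hB0 hlb heQ' hδ12 hδ0.le hCq0' hBgt
      rw [hr', le_div_iff₀ hA]
      have ht : (0:ℝ) ≤ 3 * δ * (1 + K) := by positivity
      have h9 := arith_num_bd hnum hb0 ht hA
      linarith only [h9]
  have hlow' : lam - 3 * δ * (1 + K) ≤ lam1 k0 k1 q' :=
    le_csInf (RayleighSet_nonempty k0 k1 q') hlow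
  -- UPPER BOUND
  set ε' := min (ε / 2) 1 with hε'def
  have hε'0 : 0 < ε' := lt_min (half_pos hε) one_pos
  obtain ⟨r, hrmem, hrlt⟩ := exists_lt_of_csInf_lt
    (RayleighSet_nonempty k0 k1 q) (show lam1 k0 k1 q < lam + ε' by
      rw [← hlamdef]; linarith only [hε'0])
  obtain ⟨y, g, hT, hA, hr⟩ := hrmem
  have hup : lam1 k0 k1 q' < lam + ε / 2 + 3 * δ * (1 + K) := by
    set A := ∫ x in (0:ℝ)..1, (y x) ^ 2 with hAdef
    set B := ∫ x in (0:ℝ)..1, (g x) ^ 2 with hBdef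
    have hB0 : 0 ≤ B := int01_nonneg fun x _ => sq_nonneg _
    have hb0 : 0 ≤ k0 ^ 2 * (y 0) ^ 2 + k1 ^ 2 * (y 1) ^ 2 := by positivity
    have h3AB : (0:ℝ) ≤ 3 * (A + B) := by linarith only [hA, hB0]
    have hpd : |∫ x in (0:ℝ)..1, (q' x - q x) * (y x) ^ 2| ≤ δ * (3 * (A + B)) :=
      le_trans (pairing hsub hT hA) (mul_le_mul_of_nonneg_right hnn h3AB)
    have hpd' := (abs_le.1 hpd).2
    -- bound B in terms of A
    have hlb0 := num_lb hq hq le_rfl (normNeg_qq q) hT hA he0 he1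
    have hrA : r * A = (∫ x in (0:ℝ)..1, ((g x) ^ 2 + q x * (y x) ^ 2))
        + (k0 ^ 2 * (y 0) ^ 2 + k1 ^ 2 * (y 1) ^ 2) := by
      rw [hr]
      field_simp
      ring
    have hrle : r ≤ lam + 1 := by
      have h := min_le_right (ε / 2) 1
      linarith only [hrlt, h]
    have heQ' : 2 * e * (∫ x in (0:ℝ)..1, |q x|) ≤ 1 / 2 := heQ
    have hCq0' : 0 ≤ 2 / e * (∫ x in (0:ℝ)..1, |q x|) := hCq0
    have hBK : B ≤ 4 * (|lam| + 2 / e * (∫ x in (0:ℝ)..1, |q x|) + 1) * A :=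
      arith_BK hA hB0 hb0 hlb0 hrA heQ' hrle hCq0'
    have hBK' : B ≤ K * A := by rw [hKdef]; exact hBK
    -- the perturbed quotient for the same test function
    set r'' := ((∫ x in (0:ℝ)..1, ((g x) ^ 2 + q' x * (y x) ^ 2))
        + k0 ^ 2 * (y 0) ^ 2 + k1 ^ 2 * (y 1) ^ 2) / A with hr''def
    have hmem' : r'' ∈ RayleighSet k0 k1 q' := ⟨y, g, hT, hA, rfl⟩
    have hle' : lam1 k0 k1 q' ≤ r'' := csInf_le (RayleighSet_bddBelow hq') hmem'
    have e1 : (∫ x in (0:ℝ)..1, ((g x) ^ 2 + q' x * (y x) ^ 2))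
        + k0 ^ 2 * (y 0) ^ 2 + k1 ^ 2 * (y 1) ^ 2
        = ((∫ x in (0:ℝ)..1, ((g x) ^ 2 + q x * (y x) ^ 2))
        + k0 ^ 2 * (y 0) ^ 2 + k1 ^ 2 * (y 1) ^ 2)
          + ∫ x in (0:ℝ)..1, (q' x - q x) * (y x) ^ 2 := by
      rw [num_split hq' hT, num_split hq hT, qy2_split hq hq' hT]
      ring
    have hr''eq : r'' = r + (∫ x in (0:ℝ)..1, (q' x - q x) * (y x) ^ 2) / A := by
      rw [hr''def, e1, add_div, ← hr]
    have hdiv : (∫ x in (0:ℝ)..1, (q' x - q x) * (y x) ^ 2) / A ≤ 3 * δ * (1 + K) := by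
      rw [div_le_iff₀ hA]
      exact arith_div_ub hA hpd' hBK' hδ0.le
    have hε'2 : ε' ≤ ε / 2 := min_le_left _ _
    calc lam1 k0 k1 q' ≤ r'' := hle'
      _ = r + (∫ x in (0:ℝ)..1, (q' x - q x) * (y x) ^ 2) / A := hr''eq
      _ < lam + ε' + 3 * δ * (1 + K) := by linarith only [hrlt, hdiv]
      _ ≤ lam + ε / 2 + 3 * δ * (1 + K) := by linarith only [hε'2]
  rw [abs_sub_lt_iff]
  constructor
  · linarith only [hup, hδε, hε]
  · linarith only [hlow', hδε, hε]
end

section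
/- Let u ∈ L²[0,1] be such that for every nonnegative test function y one has −∫₀¹ u(x) y'(x) dx + y(1) ≥ 0. Then u coincides almost everywhere with a non-decreasing function, and 0 ≤ u ≤ 1 almost everywhere on [0,1]. -/
open MeasureTheory Set Real Filter

variable {u : ℝ → ℝ}

lemma W1 (h : ∀ y g : ℝ → ℝ, IsTest y g → (∀ x ∈ Icc (0:ℝ) 1, 0 ≤ y x) →
      0 ≤ -(∫ x in (0:ℝ)..1, u x * g x) + y 1)
    (g : ℝ → ℝ) (hg1 : IntegrableOn g (Icc (0:ℝ) 1))
    (hg2 : IntegrableOn (fun x => (g x) ^ 2) (Icc (0:ℝ) 1))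
    (hpos : ∀ x ∈ Icc (0:ℝ) 1, 0 ≤ ∫ t in (0:ℝ)..x, g t) :
    (∫ x in (0:ℝ)..1, u x * g x) ≤ ∫ t in (0:ℝ)..1, g t := by
  have h0 : (∫ t in (0:ℝ)..0, g t) = 0 := intervalIntegral.integral_same
  have ht : IsTest (fun x => ∫ t in (0:ℝ)..x, g t) g :=
    ⟨fun x _ => by simp [h0], hg1, hg2⟩
  have := h _ g ht hpos
  simpa using this

lemma W2 (h : ∀ y g : ℝ → ℝ, IsTest y g → (∀ x ∈ Icc (0:ℝ) 1, 0 ≤ y x) →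
      0 ≤ -(∫ x in (0:ℝ)..1, u x * g x) + y 1)
    (g : ℝ → ℝ) (hg1 : IntegrableOn g (Icc (0:ℝ) 1))
    (hg2 : IntegrableOn (fun x => (g x) ^ 2) (Icc (0:ℝ) 1))
    (hpos : ∀ x ∈ Icc (0:ℝ) 1, 0 ≤ (∫ t in (0:ℝ)..1, g t) - ∫ t in (0:ℝ)..x, g t) :
    0 ≤ ∫ x in (0:ℝ)..1, u x * g x := by
  set y : ℝ → ℝ := fun x => (∫ t in (0:ℝ)..1, g t) - ∫ t in (0:ℝ)..x, g t with hy
  have h0 : (∫ t in (0:ℝ)..0, g t) = 0 := intervalIntegral.integral_same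
  have ht : IsTest y (fun x => -g x) := by
    refine ⟨fun x _ => ?_, hg1.neg, by simpa using hg2⟩
    simp only [hy, h0, sub_zero]
    rw [intervalIntegral.integral_neg]
    ring
  have := h y (fun x => -g x) ht hpos
  have hneg : (∫ x in (0:ℝ)..1, u x * -g x) = -∫ x in (0:ℝ)..1, u x * g x := by
    rw [← intervalIntegral.integral_neg]
    simp [mul_neg]
  rw [hneg] at this
  have hy1 : y 1 = 0 := by simp [hy]
  rw [hy1] at this
  linarith

lemma aux_ind_integrable (s : Set ℝ) (hs : MeasurableSet s) (hfin : volume s ≠ ⊤) (c : ℝ) :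
    Integrable (s.indicator (fun _ => c)) volume := by
  rw [integrable_indicator_iff hs]
  exact integrableOn_const hfin

lemma bounds (hu1 : IntegrableOn u (Icc (0:ℝ) 1))
    (h : ∀ y g : ℝ → ℝ, IsTest y g → (∀ x ∈ Icc (0:ℝ) 1, 0 ≤ y x) →
      0 ≤ -(∫ x in (0:ℝ)..1, u x * g x) + y 1) :
    (∀ᵐ x ∂(volume.restrict (Ioc (0:ℝ) 1)), 0 ≤ u x ∧ u x ≤ 1) := by
  have hIoc : Ioc (0:ℝ) 1 ⊆ Icc 0 1 := Ioc_subset_Icc_self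
  have huI : IntegrableOn u (Ioc (0:ℝ) 1) := hu1.mono_set hIoc
  -- common setup for a measurable set s
  have key : ∀ s : Set ℝ, MeasurableSet s →
      (0 ≤ ∫ x in s ∩ Ioc (0:ℝ) 1, u x) ∧
      (∫ x in s ∩ Ioc (0:ℝ) 1, u x) ≤ (volume (s ∩ Ioc (0:ℝ) 1)).toReal := by
    intro s hs
    set E := s ∩ Ioc (0:ℝ) 1 with hEdef
    have hE : MeasurableSet E := hs.inter measurableSet_Ioc
    have hEfin : volume E ≠ ⊤ := by
      refine (lt_of_le_of_lt (measure_mono inter_subset_right) ?_).ne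
      rw [Real.volume_Ioc]; exact ENNReal.ofReal_lt_top
    set g : ℝ → ℝ := E.indicator (fun _ => (1:ℝ)) with hgdef
    have hgi : Integrable g volume := aux_ind_integrable E hE hEfin 1
    have hgnn : ∀ x, 0 ≤ g x := fun x => indicator_nonneg (fun _ _ => zero_le_one) x
    have hgsq : (fun x => g x ^ 2) = g := by
      funext x; by_cases hx : x ∈ E <;> simp [hgdef, hx]
    have hg1 : IntegrableOn g (Icc (0:ℝ) 1) := hgi.integrableOn
    have hg2 : IntegrableOn (fun x => g x ^ 2) (Icc (0:ℝ) 1) := by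
      rw [hgsq]; exact hg1
    have hug : (fun x => u x * g x) = E.indicator u := by
      funext x; by_cases hx : x ∈ E <;> simp [hgdef, hx]
    have hiug : (∫ x in (0:ℝ)..1, u x * g x) = ∫ x in E, u x := by
      rw [hug, intervalIntegral.integral_of_le zero_le_one,
        MeasureTheory.setIntegral_indicator hE]
      rw [inter_eq_self_of_subset_right (by rw [hEdef]; exact inter_subset_right)]
    have hig : (∫ t in (0:ℝ)..1, g t) = (volume E).toReal := by
      rw [intervalIntegral.integral_of_le zero_le_one,
        MeasureTheory.setIntegral_indicator hE, setIntegral_const, smul_eq_mul, mul_one]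
      rw [inter_eq_self_of_subset_right (by rw [hEdef]; exact inter_subset_right)]
      rfl
    constructor
    · -- lower bound via W2
      have hpos : ∀ x ∈ Icc (0:ℝ) 1, 0 ≤ (∫ t in (0:ℝ)..1, g t) - ∫ t in (0:ℝ)..x, g t := by
        intro x hx
        have hadd := intervalIntegral.integral_add_adjacent_intervals
          (a := 0) (b := x) (c := 1) hgi.intervalIntegrable hgi.intervalIntegrable
        have : (∫ t in (0:ℝ)..1, g t) - ∫ t in (0:ℝ)..x, g t = ∫ t in x..1, g t := by
          rw [← hadd]; ring
        rw [this]
        exact intervalIntegral.integral_nonneg hx.2 (fun t _ => hgnn t)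
      have := W2 h g hg1 hg2 hpos
      rwa [hiug] at this
    · -- upper bound via W1
      have hpos : ∀ x ∈ Icc (0:ℝ) 1, 0 ≤ ∫ t in (0:ℝ)..x, g t := fun x hx =>
        intervalIntegral.integral_nonneg hx.1 (fun t _ => hgnn t)
      have := W1 h g hg1 hg2 hpos
      rwa [hiug, hig] at this
  have h1 : ∀ᵐ x ∂(volume.restrict (Ioc (0:ℝ) 1)), 0 ≤ u x := by
    refine ae_nonneg_of_forall_setIntegral_nonneg huI ?_
    intro s hs _
    rw [Measure.restrict_restrict hs]
    exact (key s hs).1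
  have h2 : ∀ᵐ x ∂(volume.restrict (Ioc (0:ℝ) 1)), 0 ≤ 1 - u x := by
    have hint : Integrable (fun x => 1 - u x) (volume.restrict (Ioc (0:ℝ) 1)) :=
      (integrable_const 1).sub huI
    refine ae_nonneg_of_forall_setIntegral_nonneg hint ?_
    intro s hs hsfin
    rw [Measure.restrict_restrict hs]
    have hfin2 : volume (s ∩ Ioc (0:ℝ) 1) ≠ ⊤ := by
      refine (lt_of_le_of_lt (measure_mono inter_subset_right) ?_).ne
      rw [Real.volume_Ioc]; exact ENNReal.ofReal_lt_top
    rw [integral_sub (integrableOn_const (C := (1:ℝ)) hfin2)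
      (huI.mono_set inter_subset_right)]
    rw [setIntegral_const, smul_eq_mul, mul_one]
    linarith [(key s hs).2, measureReal_def volume (s ∩ Ioc (0:ℝ) 1)]
  filter_upwards [h1, h2] with x hx1 hx2
  exact ⟨hx1, by linarith⟩

lemma aux_ind_int (a b x : ℝ) (ha : 0 ≤ a) (hx : 0 ≤ x) :
    ∫ t in (0:ℝ)..x, (Ioc a b).indicator (fun _ => (1:ℝ)) t = max (min x b - a) 0 := by
  rw [intervalIntegral.integral_of_le hx,
    MeasureTheory.setIntegral_indicator measurableSet_Ioc]
  have h1 : Ioc (0:ℝ) x ∩ Ioc a b = Ioc a (min x b) := by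
    rw [Ioc_inter_Ioc, max_eq_right ha]
  rw [h1, setIntegral_const, smul_eq_mul, mul_one, measureReal_def, Real.volume_Ioc]
  rcases le_or_gt a (min x b) with h | h
  · rw [ENNReal.toReal_ofReal (by linarith), max_eq_left (by linarith)]
  · rw [ENNReal.ofReal_of_nonpos (by linarith), ENNReal.toReal_zero,
      max_eq_right (by linarith)]

lemma volume_Ioc_ne_top (a b : ℝ) : volume (Ioc a b) ≠ ⊤ := by
  rw [Real.volume_Ioc]; exact ENNReal.ofReal_ne_top

lemma SD (hu1 : IntegrableOn u (Icc (0:ℝ) 1))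
    (h : ∀ y g : ℝ → ℝ, IsTest y g → (∀ x ∈ Icc (0:ℝ) 1, 0 ≤ y x) →
      0 ≤ -(∫ x in (0:ℝ)..1, u x * g x) + y 1)
    (a b c d : ℝ) (ha : 0 ≤ a) (hab : a < b) (hbc : b ≤ c) (hcd : c < d) (hd : d ≤ 1) :
    (b - a)⁻¹ * ∫ x in Ioc a b, u x ≤ (d - c)⁻¹ * ∫ x in Ioc c d, u x := by
  have hb1 : b ≤ 1 := hbc.trans (hcd.le.trans hd)
  have hc0 : 0 ≤ c := le_trans ha (le_trans hab.le hbc)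
  set p : ℝ := (b - a)⁻¹ with hp
  set q : ℝ := (d - c)⁻¹ with hq
  have hppos : 0 < p := inv_pos.2 (by linarith)
  have hqpos : 0 < q := inv_pos.2 (by linarith)
  set i1 : ℝ → ℝ := (Ioc a b).indicator (fun _ => (1:ℝ)) with hi1
  set i2 : ℝ → ℝ := (Ioc c d).indicator (fun _ => (1:ℝ)) with hi2
  have hii1 : Integrable i1 volume := aux_ind_integrable _ measurableSet_Ioc (volume_Ioc_ne_top a b) 1
  have hii2 : Integrable i2 volume := aux_ind_integrable _ measurableSet_Ioc (volume_Ioc_ne_top c d) 1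
  set g : ℝ → ℝ := fun x => p * i1 x - q * i2 x with hg
  have hgi : Integrable g volume := (hii1.const_mul p).sub (hii2.const_mul q)
  have hgm : Measurable g :=
    ((measurable_const.indicator measurableSet_Ioc).const_mul p).sub
      ((measurable_const.indicator measurableSet_Ioc).const_mul q)
  have hi1b : ∀ x, 0 ≤ i1 x ∧ i1 x ≤ 1 := by
    intro x; by_cases hx : x ∈ Ioc a b <;> simp [hi1, hx]
  have hi2b : ∀ x, 0 ≤ i2 x ∧ i2 x ≤ 1 := by
    intro x; by_cases hx : x ∈ Ioc c d <;> simp [hi2, hx]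
  have hgb : ∀ x, |g x| ≤ p + q := by
    intro x
    have h1 := hi1b x; have h2 := hi2b x
    rw [abs_le]
    simp only [hg]
    constructor <;>
      linarith [mul_nonneg hppos.le h1.1, mul_nonneg hqpos.le h2.1,
        mul_le_mul_of_nonneg_left h1.2 hppos.le, mul_le_mul_of_nonneg_left h2.2 hqpos.le]
  have hg1 : IntegrableOn g (Icc (0:ℝ) 1) := hgi.integrableOn
  have hg2 : IntegrableOn (fun x => g x ^ 2) (Icc (0:ℝ) 1) := by
    refine Integrable.mono' (integrable_const ((p + q) ^ 2))
      ((hgm.pow_const 2).aestronglyMeasurable) ?_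
    refine Filter.Eventually.of_forall (fun x => ?_)
    rw [Real.norm_eq_abs, abs_pow]
    exact pow_le_pow_left₀ (abs_nonneg _) (hgb x) 2
  -- value of partial integrals
  have hpart : ∀ x : ℝ, 0 ≤ x → (∫ t in (0:ℝ)..x, g t)
      = p * max (min x b - a) 0 - q * max (min x d - c) 0 := by
    intro x hx
    rw [hg]
    rw [intervalIntegral.integral_sub ((hii1.const_mul p).intervalIntegrable)
      ((hii2.const_mul q).intervalIntegrable)]
    rw [intervalIntegral.integral_const_mul, intervalIntegral.integral_const_mul,
      hi1, hi2, aux_ind_int a b x ha hx, aux_ind_int c d x hc0 hx]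
  have hpos : ∀ x ∈ Icc (0:ℝ) 1, 0 ≤ ∫ t in (0:ℝ)..x, g t := by
    intro x hx
    rw [hpart x hx.1]
    rcases le_or_gt x c with hxc | hxc
    · have hF2 : max (min x d - c) 0 = 0 := max_eq_right (by
        have := min_le_left x d; linarith)
      rw [hF2, mul_zero, sub_zero]
      positivity
    · have hbx : b ≤ x := hbc.trans hxc.le
      have hF1 : max (min x b - a) 0 = b - a := by
        rw [min_eq_right hbx]; exact max_eq_left (by linarith)
      have hF2le : max (min x d - c) 0 ≤ d - c := by
        refine max_le ?_ (by linarith)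
        have := min_le_right x d; linarith
      have e1 : p * (b - a) = 1 := inv_mul_cancel₀ (by linarith)
      have e2 : q * (d - c) = 1 := inv_mul_cancel₀ (by linarith)
      have : q * max (min x d - c) 0 ≤ q * (d - c) :=
        mul_le_mul_of_nonneg_left hF2le hqpos.le
      rw [hF1]
      linarith
  -- total integral of g is zero
  have htot : (∫ t in (0:ℝ)..1, g t) = 0 := by
    rw [hpart 1 zero_le_one, min_eq_right hb1, min_eq_right hd,
      max_eq_left (by linarith), max_eq_left (by linarith),
      inv_mul_cancel₀ (by linarith : b - a ≠ 0), inv_mul_cancel₀ (by linarith : d - c ≠ 0)]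
    ring
  -- integral of u * g
  have hsub1 : Ioc a b ⊆ Icc (0:ℝ) 1 := fun x hx => ⟨(lt_of_le_of_lt ha hx.1).le, hx.2.trans hb1⟩
  have hsub2 : Ioc c d ⊆ Icc (0:ℝ) 1 := fun x hx => ⟨(lt_of_le_of_lt hc0 hx.1).le, hx.2.trans hd⟩
  have hiu1 : Integrable ((Ioc a b).indicator u) volume :=
    (integrable_indicator_iff measurableSet_Ioc).2 (hu1.mono_set hsub1)
  have hiu2 : Integrable ((Ioc c d).indicator u) volume :=
    (integrable_indicator_iff measurableSet_Ioc).2 (hu1.mono_set hsub2)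
  have hug : (fun x => u x * g x)
      = fun x => p * (Ioc a b).indicator u x - q * (Ioc c d).indicator u x := by
    funext x
    by_cases hx1 : x ∈ Ioc a b <;> by_cases hx2 : x ∈ Ioc c d <;>
      simp [hg, hi1, hi2, hx1, hx2] <;> ring
  have hiug : (∫ x in (0:ℝ)..1, u x * g x)
      = p * (∫ x in Ioc a b, u x) - q * ∫ x in Ioc c d, u x := by
    rw [hug, intervalIntegral.integral_of_le zero_le_one,
      integral_sub ((hiu1.const_mul p).integrableOn) ((hiu2.const_mul q).integrableOn),
      integral_const_mul, integral_const_mul,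
      MeasureTheory.setIntegral_indicator measurableSet_Ioc,
      MeasureTheory.setIntegral_indicator measurableSet_Ioc]
    rw [Ioc_inter_Ioc, Ioc_inter_Ioc, max_eq_right ha, min_eq_right hb1,
      max_eq_right hc0, min_eq_right hd]
  have := W1 h g hg1 hg2 hpos
  rw [hiug, htot] at this
  linarith

lemma Havg (x r : ℝ) (hr : 0 < r) (h0 : 0 ≤ x - r) (h1 : x + r ≤ 1) :
    ⨍ y in Metric.closedBall x r, ((Icc (0:ℝ) 1).indicator u) y
      = (2 * r)⁻¹ * ∫ t in Ioc (x - r) (x + r), u t := by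
  rw [Real.closedBall_eq_Icc, setAverage_eq, measureReal_def, Real.volume_Icc]
  have h2 : x + r - (x - r) = 2 * r := by ring
  rw [h2, ENNReal.toReal_ofReal (by linarith), integral_Icc_eq_integral_Ioc]
  rw [setIntegral_congr_fun measurableSet_Ioc (fun t ht =>
    Set.indicator_of_mem (show t ∈ Icc (0:ℝ) 1 from ⟨by linarith [ht.1], by linarith [ht.2]⟩) u)]
  rw [smul_eq_mul]

lemma hLeb (hu1 : IntegrableOn u (Icc (0:ℝ) 1)) :
    ∀ᵐ x ∂(volume : Measure ℝ),
      Tendsto (fun r => ⨍ y in Metric.closedBall x r, ((Icc (0:ℝ) 1).indicator u) y)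
        (nhdsWithin 0 (Ioi 0)) (nhds ((Icc (0:ℝ) 1).indicator u x)) := by
  have hf : Integrable ((Icc (0:ℝ) 1).indicator u) volume :=
    (integrable_indicator_iff measurableSet_Icc).2 hu1
  filter_upwards [IsUnifLocDoublingMeasure.ae_tendsto_average volume hf.locallyIntegrable 1] with x hx
  refine hx (fun _ => x) id tendsto_id ?_
  filter_upwards [self_mem_nhdsWithin] with r hr
  exact Metric.mem_closedBall_self (by rw [one_mul]; exact le_of_lt hr)

theorem stmt11 (u : ℝ → ℝ)
    (hu1 : IntegrableOn u (Icc (0:ℝ) 1))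
    (hu2 : IntegrableOn (fun x => (u x) ^ 2) (Icc (0:ℝ) 1))
    (h : ∀ y g : ℝ → ℝ, IsTest y g → (∀ x ∈ Icc (0:ℝ) 1, 0 ≤ y x) →
      0 ≤ -(∫ x in (0:ℝ)..1, u x * g x) + y 1) :
    (∃ v : ℝ → ℝ, MonotoneOn v (Icc (0:ℝ) 1) ∧
      ∀ᵐ x ∂(volume.restrict (Icc (0:ℝ) 1)), u x = v x) ∧
    (∀ᵐ x ∂(volume.restrict (Icc (0:ℝ) 1)), 0 ≤ u x ∧ u x ≤ 1) := by
  have hres : (volume : Measure ℝ).restrict (Ioc (0:ℝ) 1) = volume.restrict (Icc (0:ℝ) 1) :=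
    Measure.restrict_congr_set Ioc_ae_eq_Icc
  have hb := bounds hu1 h
  have hbIcc : ∀ᵐ x ∂(volume.restrict (Icc (0:ℝ) 1)), 0 ≤ u x ∧ u x ≤ 1 := hres ▸ hb
  refine ⟨?_, hbIcc⟩
  have hbv : ∀ᵐ x ∂(volume : Measure ℝ), x ∈ Ioc (0:ℝ) 1 → (0 ≤ u x ∧ u x ≤ 1) :=
    ae_imp_of_ae_restrict hb
  set f : ℝ → ℝ := (Icc (0:ℝ) 1).indicator u with hf
  have hL := hLeb hu1
  set good : Set ℝ := {x | (x ∈ Ioc (0:ℝ) 1 → (0 ≤ u x ∧ u x ≤ 1)) ∧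
    Tendsto (fun r => ⨍ y in Metric.closedBall x r, f y)
      (nhdsWithin 0 (Ioi 0)) (nhds (f x))} with hgooddef
  have hgood : ∀ᵐ x ∂(volume : Measure ℝ), x ∈ good := by
    filter_upwards [hbv, hL] with x h1 h2
    exact ⟨h1, h2⟩
  set S : Set ℝ := Ioo 0 1 ∩ good with hSdef
  have hbS : ∀ a ∈ S, 0 ≤ u a ∧ u a ≤ 1 := fun a ha => ha.2.1 ⟨ha.1.1, ha.1.2.le⟩
  have hfS : ∀ a ∈ S, f a = u a := fun a ha =>
    Set.indicator_of_mem (Ioo_subset_Icc_self ha.1) u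
  have hmono : ∀ a ∈ S, ∀ b ∈ S, a ≤ b → u a ≤ u b := by
    intro a ha b hb hab
    rcases hab.eq_or_lt with rfl | hab
    · exact le_refl _
    have ha0 : 0 < a := ha.1.1
    have hb1 : b < 1 := hb.1.2
    set ε : ℝ := min (min a (1 - b)) ((b - a) / 2) with hε
    have hεpos : 0 < ε := lt_min (lt_min ha0 (by linarith)) (by linarith)
    have hev : ∀ᶠ r in nhdsWithin (0:ℝ) (Ioi 0),
        (⨍ y in Metric.closedBall a r, f y) ≤ ⨍ y in Metric.closedBall b r, f y := by
      filter_upwards [Ioo_mem_nhdsGT_of_mem ⟨le_refl (0:ℝ), hεpos⟩] with r hr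
      have hr0 : 0 < r := hr.1
      have hra : r ≤ a := hr.2.le.trans ((min_le_left _ _).trans (min_le_left _ _))
      have hrb : r ≤ 1 - b := hr.2.le.trans ((min_le_left _ _).trans (min_le_right _ _))
      have hr2 : r ≤ (b - a) / 2 := hr.2.le.trans (min_le_right _ _)
      rw [Havg a r hr0 (by linarith) (by linarith), Havg b r hr0 (by linarith) (by linarith)]
      have hsd := SD hu1 h (a - r) (a + r) (b - r) (b + r)
        (by linarith) (by linarith) (by linarith) (by linarith) (by linarith)
      have e1 : a + r - (a - r) = 2 * r := by ring
      have e2 : b + r - (b - r) = 2 * r := by ring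
      rw [e1, e2] at hsd
      exact hsd
    have hle := le_of_tendsto_of_tendsto ha.2.2 hb.2.2 hev
    rwa [hfS a ha, hfS b hb] at hle
  set v : ℝ → ℝ := fun x => sInf (insert 1 (u '' (S ∩ Ici x))) with hv
  have hbdd : ∀ x : ℝ, BddBelow (insert 1 (u '' (S ∩ Ici x))) := by
    intro x
    refine ⟨0, ?_⟩
    rintro z (rfl | ⟨t, ht, rfl⟩)
    · exact zero_le_one
    · exact (hbS t ht.1).1
  have hne : ∀ x : ℝ, (insert 1 (u '' (S ∩ Ici x))).Nonempty := fun x => ⟨1, mem_insert _ _⟩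
  have hvmono : Monotone v := by
    intro x x' hxx'
    exact csInf_le_csInf (hbdd x) (hne x')
      (insert_subset_insert (image_mono (inter_subset_inter_right _ (Ici_subset_Ici.2 hxx'))))
  have hvS : ∀ s ∈ S, v s = u s := by
    intro s hs
    refine le_antisymm (csInf_le (hbdd s) (mem_insert_of_mem _ ⟨s, ⟨hs, le_refl s⟩, rfl⟩)) ?_
    refine le_csInf (hne s) ?_
    rintro z (rfl | ⟨t, ht, rfl⟩)
    · exact (hbS s hs).2
    · exact hmono s hs t ht.1 ht.2
  refine ⟨v, hvmono.monotoneOn _, ?_⟩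
  rw [ae_iff, Measure.restrict_apply' measurableSet_Icc]
  have hnull1 : volume ({0, 1} : Set ℝ) = 0 := by
    rw [show ({0, 1} : Set ℝ) = {0} ∪ {1} from rfl]
    exact measure_union_null (measure_singleton 0) (measure_singleton 1)
  have hnull2 : volume {x : ℝ | x ∉ good} = 0 := by
    rw [ae_iff] at hgood
    exact hgood
  refine measure_mono_null (fun x hx => ?_) (measure_union_null hnull1 hnull2)
  obtain ⟨hxne, hxI⟩ := hx
  by_cases hg : x ∈ good
  · left
    by_cases h0 : x = 0
    · exact Or.inl h0
    by_cases h1 : x = 1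
    · exact Or.inr h1
    exfalso
    have hxS : x ∈ S := ⟨⟨lt_of_le_of_ne hxI.1 (Ne.symm h0), lt_of_le_of_ne hxI.2 h1⟩, hg⟩
    exact hxne (hvS x hxS).symm
  · exact Or.inr hg
end

section
/- Let μ > 0 and ζ ∈ [0,1] satisfy √μ·(ζ − α_μ) ∈ (−π/2, π/2) and √μ·(1 − β_μ − ζ) ∈ (−π/2, π/2), where α_μ = (1/√μ)·arctan(k₀²/√μ) and β_μ = (1/√μ)·arctan(k₁²/√μ). Set a := √μ·( tan(√μ·(ζ − α_μ)) + tan(√μ·(1 − β_μ − ζ)) ). Then λ₁(a·δ_ζ) = μ. -/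
open MeasureTheory Set Real Filter

/-- First eigenvalue `λ₁(a·δ_ζ)` of the problem with point-mass potential `a·δ_ζ`
and boundary conditions `y'(0) - k₀² y(0) = 0`, `y'(1) + k₁² y(1) = 0`, defined as the
infimum of the corresponding Rayleigh quotient. -/
noncomputable def lam1Delta (k0 k1 a ζ : ℝ) : ℝ :=
  sInf { r : ℝ | ∃ y g : ℝ → ℝ, IsTest y g ∧ (0 < ∫ x in (0:ℝ)..1, (y x) ^ 2) ∧
    r = ((∫ x in (0:ℝ)..1, (g x) ^ 2) + a * (y ζ) ^ 2
          + k0 ^ 2 * (y 0) ^ 2 + k1 ^ 2 * (y 1) ^ 2) / (∫ x in (0:ℝ)..1, (y x) ^ 2) }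

/-- `alphaCoef k μ = (1/√μ) · arctan(k²/√μ)`. -/
noncomputable def alphaCoef (k μ : ℝ) : ℝ :=
  (1 / Real.sqrt μ) * Real.arctan (k ^ 2 / Real.sqrt μ)

lemma swapD {c d : ℝ} {f h : ℝ → ℝ}
    (hf : IntegrableOn f (Ioc c d)) (hh : IntegrableOn h (Ioc c d)) :
    ∫ x in Ioc c d, f x * (∫ t in Ioc c x, h t) =
    ∫ t in Ioc c d, (∫ x in Ioc t d, f x) * h t := by
  set μ0 := volume.restrict (Ioc c d) with hμ0
  set K : ℝ × ℝ → ℝ := {p : ℝ × ℝ | p.2 ≤ p.1}.indicator (fun z => f z.1 * h z.2) with hKdef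
  have hS : MeasurableSet {p : ℝ × ℝ | p.2 ≤ p.1} :=
    measurableSet_le measurable_snd measurable_fst
  have hK : Integrable K (μ0.prod μ0) := (hf.mul_prod hh).indicator hS
  have swap : (∫ x, ∫ t, K (x, t) ∂μ0 ∂μ0) = ∫ t, ∫ x, K (x, t) ∂μ0 ∂μ0 :=
    MeasureTheory.integral_integral_swap hK
  have hL : ∀ x ∈ Ioc c d, (∫ t, K (x, t) ∂μ0) = f x * ∫ t in Ioc c x, h t := by
    intro x hx
    have h1 : (fun t => K (x, t)) = (Iic x).indicator (fun t => f x * h t) := by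
      funext t
      simp [hKdef, Set.indicator_apply, Set.mem_setOf_eq, Set.mem_Iic]
    rw [h1, integral_indicator measurableSet_Iic, hμ0,
      Measure.restrict_restrict measurableSet_Iic]
    have hset : Iic x ∩ Ioc c d = Ioc c x := by
      rw [Set.inter_comm, Set.Ioc_inter_Iic, min_eq_right hx.2]
    rw [hset, MeasureTheory.integral_const_mul]
  have hR : ∀ t ∈ Ioc c d, (∫ x, K (x, t) ∂μ0) = (∫ x in Ioc t d, f x) * h t := by
    intro t ht
    have h1 : (fun x => K (x, t)) = (Ici t).indicator (fun x => f x * h t) := by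
      funext x
      simp [hKdef, Set.indicator_apply, Set.mem_setOf_eq, Set.mem_Ici]
    rw [h1, integral_indicator measurableSet_Ici, hμ0,
      Measure.restrict_restrict measurableSet_Ici]
    have hset : Ici t ∩ Ioc c d = Icc t d := by
      ext x
      simp only [Set.mem_inter_iff, Set.mem_Ici, Set.mem_Ioc, Set.mem_Icc]
      constructor
      · rintro ⟨h1, h2, h3⟩; exact ⟨h1, h3⟩
      · rintro ⟨h1, h2⟩; exact ⟨h1, lt_of_lt_of_le ht.1 h1, h2⟩
    rw [hset, integral_Icc_eq_integral_Ioc, MeasureTheory.integral_mul_const]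
  calc ∫ x in Ioc c d, f x * (∫ t in Ioc c x, h t)
      = ∫ x, ∫ t, K (x, t) ∂μ0 ∂μ0 := by
        rw [hμ0]; exact (setIntegral_congr_fun measurableSet_Ioc (fun x hx => (hL x hx).symm))
    _ = ∫ t, ∫ x, K (x, t) ∂μ0 ∂μ0 := swap
    _ = ∫ t in Ioc c d, (∫ x in Ioc t d, f x) * h t := by
        rw [hμ0]; exact setIntegral_congr_fun measurableSet_Ioc hR

lemma swapD' {c d : ℝ} (hcd : c ≤ d) {f h : ℝ → ℝ}
    (hf : IntegrableOn f (Ioc c d)) (hh : IntegrableOn h (Ioc c d)) :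
    ∫ x in c..d, f x * (∫ t in c..x, h t) =
    ∫ t in c..d, (∫ x in t..d, f x) * h t := by
  rw [intervalIntegral.integral_of_le hcd, intervalIntegral.integral_of_le hcd]
  rw [setIntegral_congr_fun measurableSet_Ioc
    (fun x (hx : x ∈ Ioc c d) => by
      dsimp only; rw [intervalIntegral.integral_of_le hx.1.le] :
      EqOn (fun x => f x * (∫ t in c..x, h t)) (fun x => f x * (∫ t in Ioc c x, h t)) (Ioc c d)),
    setIntegral_congr_fun measurableSet_Ioc
    (fun t (ht : t ∈ Ioc c d) => by
      dsimp only; rw [intervalIntegral.integral_of_le ht.2] :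
      EqOn (fun t => (∫ x in t..d, f x) * h t) (fun t => (∫ x in Ioc t d, f x) * h t) (Ioc c d))]
  exact swapD hf hh

/-- continuity of the primitive, interval-integral form -/
lemma contPrim {c d : ℝ} {g : ℝ → ℝ} (hg : IntegrableOn g (Icc c d)) :
    ContinuousOn (fun x => ∫ t in c..x, g t) (Icc c d) := by
  apply (intervalIntegral.continuousOn_primitive hg).congr
  intro x hx
  exact intervalIntegral.integral_of_le hx.1

/-- ∫ G g = G²/2 where G is the primitive of g -/
lemma primSq {c d : ℝ} (hcd : c ≤ d) {g : ℝ → ℝ} (hg : IntegrableOn g (Icc c d)) :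
    ∫ x in c..d, (∫ t in c..x, g t) * g x = (∫ t in c..d, g t) ^ 2 / 2 := by
  set G : ℝ → ℝ := fun x => ∫ t in c..x, g t with hG
  have hgIoc : IntegrableOn g (Ioc c d) := hg.mono_set Ioc_subset_Icc_self
  have hGc : ContinuousOn G (Icc c d) := contPrim hg
  have hGb : ∃ C, ∀ᵐ x ∂(volume.restrict (Ioc c d)), ‖G x‖ ≤ C := by
    rcases (isCompact_Icc (a := c) (b := d)).exists_bound_of_continuousOn hGc with ⟨C, hC⟩
    exact ⟨C, (ae_restrict_iff' measurableSet_Ioc).2 (Filter.Eventually.of_forall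
      (fun x hx => hC x (Ioc_subset_Icc_self hx)))⟩
  have hGm : AEStronglyMeasurable G (volume.restrict (Ioc c d)) :=
    (hGc.mono Ioc_subset_Icc_self).aestronglyMeasurable measurableSet_Ioc
  obtain ⟨C, hC⟩ := hGb
  have hGg : IntegrableOn (fun x => G x * g x) (Ioc c d) :=
    hgIoc.bdd_mul hGm hC
  have swap := swapD' hcd hgIoc hgIoc
  -- LHS of swap is ∫ g x * G x ; relate
  have hL : ∫ x in c..d, g x * G x = ∫ x in c..d, G x * g x := by
    apply intervalIntegral.integral_congr; intro x _; exact mul_comm _ _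
  -- RHS: ∫ t, (∫ t..d g) * g t = ∫ (G d - G t) * g t
  have hsub : ∀ t ∈ Set.uIcc c d, (∫ x in t..d, g x) * g t = (G d - G t) * g t := by
    intro t ht
    rw [Set.uIcc_of_le hcd] at ht
    have h1 : IntervalIntegrable g volume c t :=
      (intervalIntegrable_iff_integrableOn_Icc_of_le ht.1).2 (hg.mono_set (Icc_subset_Icc le_rfl ht.2))
    have h2 : IntervalIntegrable g volume t d :=
      (intervalIntegrable_iff_integrableOn_Icc_of_le ht.2).2 (hg.mono_set (Icc_subset_Icc ht.1 le_rfl))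
    have : G t + ∫ x in t..d, g x = G d := intervalIntegral.integral_add_adjacent_intervals h1 h2
    have : (∫ x in t..d, g x) = G d - G t := by linarith
    rw [this]
  rw [hL] at swap
  rw [intervalIntegral.integral_congr hsub] at swap
  have hsplit : ∫ t in c..d, (G d - G t) * g t
      = G d * (∫ t in c..d, g t) - ∫ t in c..d, G t * g t := by
    have e : ∀ t, (G d - G t) * g t = G d * g t - G t * g t := by intro t; ring
    simp_rw [e]
    rw [intervalIntegral.integral_sub
      ((intervalIntegrable_iff_integrableOn_Ioc_of_le hcd).2 ((hg.mono_set Ioc_subset_Icc_self).const_mul (G d)))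
      ((intervalIntegrable_iff_integrableOn_Ioc_of_le hcd).2 hGg),
      intervalIntegral.integral_const_mul]
  rw [hsplit] at swap
  have : (2:ℝ) * ∫ x in c..d, G x * g x = G d ^ 2 := by
    have hGd : G d = ∫ t in c..d, g t := rfl
    nlinarith [swap]
  show (∫ x in c..d, G x * g x) = G d ^2 / 2
  linarith

/-- chain rule a.e.: square of an absolutely continuous function -/
lemma sqAC {c d : ℝ} (hcd : c ≤ d) {y g : ℝ → ℝ}
    (hy : ∀ x ∈ Icc c d, y x = y c + ∫ t in c..x, g t)
    (hg : IntegrableOn g (Icc c d)) :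
    ∀ x ∈ Icc c d, (y x) ^ 2 = (y c) ^ 2 + ∫ t in c..x, 2 * y t * g t := by
  intro x hx
  set G : ℝ → ℝ := fun u => ∫ t in c..u, g t with hG
  have hgx : IntegrableOn g (Icc c x) := hg.mono_set (Icc_subset_Icc le_rfl hx.2)
  have key : ∫ t in c..x, 2 * y t * g t = 2 * y c * G x + G x ^ 2 := by
    have congr1 : ∫ t in c..x, 2 * y t * g t
        = ∫ t in c..x, (2 * y c * g t + 2 * (G t * g t)) := by
      apply intervalIntegral.integral_congr
      intro t ht
      rw [Set.uIcc_of_le hx.1] at ht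
      have := hy t ⟨ht.1, le_trans ht.2 hx.2⟩
      dsimp only
      rw [this]; ring
    rw [congr1]
    have hGc : ContinuousOn G (Icc c x) := contPrim hgx
    have hGm : AEStronglyMeasurable G (volume.restrict (Ioc c x)) :=
      (hGc.mono Ioc_subset_Icc_self).aestronglyMeasurable measurableSet_Ioc
    have hGb : ∃ C, ∀ᵐ u ∂(volume.restrict (Ioc c x)), ‖G u‖ ≤ C := by
      rcases (isCompact_Icc (a := c) (b := x)).exists_bound_of_continuousOn hGc with ⟨C, hC⟩
      exact ⟨C, (ae_restrict_iff' measurableSet_Ioc).2 (Filter.Eventually.of_forall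
        (fun u hu => hC u (Ioc_subset_Icc_self hu)))⟩
    obtain ⟨C, hC⟩ := hGb
    have hGg : IntegrableOn (fun u => G u * g u) (Ioc c x) :=
      (hg.mono_set (Ioc_subset_Icc_self.trans (Icc_subset_Icc le_rfl hx.2))).bdd_mul hGm hC
    rw [intervalIntegral.integral_add
      ((intervalIntegrable_iff_integrableOn_Ioc_of_le hx.1).2
        ((hgx.mono_set Ioc_subset_Icc_self).const_mul _))
      ((intervalIntegrable_iff_integrableOn_Ioc_of_le hx.1).2 (hGg.const_mul 2)),
      intervalIntegral.integral_const_mul, intervalIntegral.integral_const_mul,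
      primSq hx.1 hgx]
    ring
  rw [key, hy x hx]
  ring

/-- integration by parts: C¹ function against a primitive -/
lemma parts {c d : ℝ} (hcd : c ≤ d) {p p' h H : ℝ → ℝ}
    (hp : ∀ x ∈ Icc c d, HasDerivAt p (p' x) x)
    (hp' : ContinuousOn p' (Icc c d))
    (hh : IntegrableOn h (Icc c d))
    (hH : ∀ x ∈ Icc c d, H x = H c + ∫ t in c..x, h t) :
    ∫ x in c..d, p x * h x
      = p d * H d - p c * H c - ∫ x in c..d, p' x * H x := by
  have hpc : ContinuousOn p (Icc c d) := fun x hx => ((hp x hx).continuousAt).continuousWithinAt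
  have hhIoc : IntegrableOn h (Ioc c d) := hh.mono_set Ioc_subset_Icc_self
  have hp'Ioc : IntegrableOn p' (Ioc c d) :=
    (hp'.integrableOn_Icc).mono_set Ioc_subset_Icc_self
  have hftc : ∀ t ∈ Icc c d, ∫ x in t..d, p' x = p d - p t := by
    intro t ht
    exact intervalIntegral.integral_eq_sub_of_hasDerivAt
      (fun x hx => hp x (by rw [Set.uIcc_of_le ht.2] at hx; exact ⟨le_trans ht.1 hx.1, hx.2⟩))
      ((intervalIntegrable_iff_integrableOn_Icc_of_le ht.2).2
        (hp'.integrableOn_Icc.mono_set (Icc_subset_Icc ht.1 le_rfl)))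
  -- bounded measurable facts for products
  have hpb : ∃ C, ∀ᵐ x ∂(volume.restrict (Ioc c d)), ‖p x‖ ≤ C := by
    rcases (isCompact_Icc (a := c) (b := d)).exists_bound_of_continuousOn hpc with ⟨C, hC⟩
    exact ⟨C, (ae_restrict_iff' measurableSet_Ioc).2 (Filter.Eventually.of_forall
      (fun u hu => hC u (Ioc_subset_Icc_self hu)))⟩
  obtain ⟨Cp, hCp⟩ := hpb
  have hpm : AEStronglyMeasurable p (volume.restrict (Ioc c d)) :=
    (hpc.mono Ioc_subset_Icc_self).aestronglyMeasurable measurableSet_Ioc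
  have hph : IntegrableOn (fun x => p x * h x) (Ioc c d) := hhIoc.bdd_mul hpm hCp
  -- step 2 : Fubini
  have fub := swapD' hcd hp'Ioc hhIoc
  have fubR : ∫ t in c..d, (∫ x in t..d, p' x) * h t
      = p d * (∫ t in c..d, h t) - ∫ t in c..d, p t * h t := by
    have e1 : ∫ t in c..d, (∫ x in t..d, p' x) * h t
        = ∫ t in c..d, (p d * h t - p t * h t) := by
      apply intervalIntegral.integral_congr
      intro t ht
      rw [Set.uIcc_of_le hcd] at ht
      dsimp only
      rw [hftc t ht]; ring
    rw [e1, intervalIntegral.integral_sub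
      ((intervalIntegrable_iff_integrableOn_Ioc_of_le hcd).2 (hhIoc.const_mul _))
      ((intervalIntegrable_iff_integrableOn_Ioc_of_le hcd).2 hph),
      intervalIntegral.integral_const_mul]
  -- step 1 : expand  ∫ p' H
  have hHint : ∫ t in c..d, h t = H d - H c := by
    have := hH d ⟨hcd, le_rfl⟩; linarith
  have hPrimCont : ContinuousOn (fun x => ∫ t in c..x, h t) (Icc c d) := contPrim hh
  have hp'H : ∫ x in c..d, p' x * H x
      = H c * (p d - p c) + ∫ x in c..d, p' x * (∫ t in c..x, h t) := by
    have e1 : ∫ x in c..d, p' x * H x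
        = ∫ x in c..d, (H c * p' x + p' x * (∫ t in c..x, h t)) := by
      apply intervalIntegral.integral_congr
      intro x hx
      rw [Set.uIcc_of_le hcd] at hx
      dsimp only
      rw [hH x hx]; ring
    have hprimm : AEStronglyMeasurable (fun x => ∫ t in c..x, h t)
        (volume.restrict (Ioc c d)) :=
      (hPrimCont.mono Ioc_subset_Icc_self).aestronglyMeasurable measurableSet_Ioc
    have hprimb : ∃ C, ∀ᵐ x ∂(volume.restrict (Ioc c d)),
        ‖∫ t in c..x, h t‖ ≤ C := by
      rcases (isCompact_Icc (a := c) (b := d)).exists_bound_of_continuousOn hPrimCont with ⟨C, hC⟩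
      exact ⟨C, (ae_restrict_iff' measurableSet_Ioc).2 (Filter.Eventually.of_forall
        (fun u hu => hC u (Ioc_subset_Icc_self hu)))⟩
    obtain ⟨Cq, hCq⟩ := hprimb
    have hp'prim : IntegrableOn (fun x => p' x * (∫ t in c..x, h t)) (Ioc c d) := by
      have h2 := hp'Ioc.bdd_mul (f := fun x => ∫ t in c..x, h t) hprimm hCq
      exact h2.congr (Filter.Eventually.of_forall (fun x => mul_comm _ _))
    rw [e1, intervalIntegral.integral_add
      ((intervalIntegrable_iff_integrableOn_Ioc_of_le hcd).2 (hp'Ioc.const_mul _))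
      ((intervalIntegrable_iff_integrableOn_Ioc_of_le hcd).2 hp'prim),
      intervalIntegral.integral_const_mul, hftc c ⟨le_rfl, hcd⟩]
  rw [fub] at hp'H
  rw [fubR, hHint] at hp'H
  linarith

lemma bddOn {c d : ℝ} {f : ℝ → ℝ} (hf : ContinuousOn f (Icc c d)) :
    AEStronglyMeasurable f (volume.restrict (Icc c d)) ∧
    ∃ C, ∀ᵐ x ∂(volume.restrict (Icc c d)), ‖f x‖ ≤ C := by
  refine ⟨hf.aestronglyMeasurable measurableSet_Icc, ?_⟩
  rcases (isCompact_Icc (a := c) (b := d)).exists_bound_of_continuousOn hf with ⟨C, hC⟩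
  exact ⟨C, (ae_restrict_iff' measurableSet_Icc).2 (Filter.Eventually.of_forall hC)⟩

lemma ycont {c d : ℝ} {y g : ℝ → ℝ}
    (hy : ∀ x ∈ Icc c d, y x = y c + ∫ t in c..x, g t)
    (hg : IntegrableOn g (Icc c d)) : ContinuousOn y (Icc c d) := by
  apply ContinuousOn.congr (f := fun x => y c + ∫ t in c..x, g t)
  · exact continuousOn_const.add (contPrim hg)
  · intro x hx; exact hy x hx

lemma master {c d μ : ℝ} (hcd : c ≤ d) {p y g : ℝ → ℝ}
    (hp : ∀ x ∈ Icc c d, HasDerivAt p (-(μ + p x ^ 2)) x)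
    (hy : ∀ x ∈ Icc c d, y x = y c + ∫ t in c..x, g t)
    (hg : IntegrableOn g (Icc c d))
    (hg2 : IntegrableOn (fun x => g x ^ 2) (Icc c d)) :
    ∫ x in c..d, (g x - p x * y x) ^ 2
      = (∫ x in c..d, g x ^ 2) - μ * (∫ x in c..d, y x ^ 2)
        - p d * y d ^ 2 + p c * y c ^ 2 := by
  have hpc : ContinuousOn p (Icc c d) := fun x hx => ((hp x hx).continuousAt).continuousWithinAt
  have hyc : ContinuousOn y (Icc c d) := ycont hy hg
  have hp'c : ContinuousOn (fun x => -(μ + p x ^ 2)) (Icc c d) :=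
    (continuousOn_const.add (hpc.pow 2)).neg
  obtain ⟨hym, Cy, hCy⟩ := bddOn hyc
  obtain ⟨hpm, Cp, hCp⟩ := bddOn hpc
  -- h = 2 y g integrable on Icc
  have hh : IntegrableOn (fun x => 2 * y x * g x) (Icc c d) := by
    have h1 : IntegrableOn (fun x => y x * g x) (Icc c d) := hg.bdd_mul hym hCy
    exact (h1.const_mul 2).congr (Filter.Eventually.of_forall (fun x => by ring))
  -- y² as primitive of h
  have hH := sqAC hcd hy hg
  -- parts
  have hparts := parts hcd hp hp'c hh hH
  -- integrabilities
  have hy2 : IntegrableOn (fun x => y x ^ 2) (Icc c d) := (hyc.pow 2).integrableOn_Icc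
  have hp2y2 : IntegrableOn (fun x => p x ^ 2 * y x ^ 2) (Icc c d) :=
    ((hpc.pow 2).mul (hyc.pow 2)).integrableOn_Icc
  have hpyg : IntegrableOn (fun x => p x * (2 * y x * g x)) (Icc c d) :=
    hh.bdd_mul hpm hCp
  have ii : ∀ {f : ℝ → ℝ}, IntegrableOn f (Icc c d) → IntervalIntegrable f volume c d :=
    fun hf => (intervalIntegrable_iff_integrableOn_Icc_of_le hcd).2 hf
  -- expansion
  have expand : ∫ x in c..d, (g x - p x * y x) ^ 2
      = (∫ x in c..d, g x ^ 2) - (∫ x in c..d, p x * (2 * y x * g x))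
        + ∫ x in c..d, p x ^ 2 * y x ^ 2 := by
    have e1 : ∀ x, (g x - p x * y x) ^ 2
        = g x ^ 2 - p x * (2 * y x * g x) + p x ^ 2 * y x ^ 2 := fun x => by ring
    simp_rw [e1]
    rw [intervalIntegral.integral_add (((ii hg2).sub (ii hpyg))) (ii hp2y2),
      intervalIntegral.integral_sub (ii hg2) (ii hpyg)]
  -- ∫ p' y²
  have hRS : ∫ x in c..d, -(μ + p x ^ 2) * y x ^ 2
      = -(μ * ∫ x in c..d, y x ^ 2) - ∫ x in c..d, p x ^ 2 * y x ^ 2 := by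
    have e1 : ∀ x, -(μ + p x ^ 2) * y x ^ 2
        = -(μ * y x ^ 2) - p x ^ 2 * y x ^ 2 := fun x => by ring
    simp_rw [e1]
    have hmu : IntervalIntegrable (fun x => -(μ * y x ^ 2)) volume c d :=
      ((ii hy2).const_mul μ).neg
    rw [intervalIntegral.integral_sub hmu (ii hp2y2)]
    have : ∫ x in c..d, -(μ * y x ^ 2) = -(μ * ∫ x in c..d, y x ^ 2) := by
      rw [← intervalIntegral.integral_const_mul, ← intervalIntegral.integral_neg]
    rw [this]
  rw [hRS] at hparts
  rw [expand, hparts]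
  ring

lemma hasDerivAt_p1 (s a : ℝ) {x : ℝ} (hc : Real.cos (s * (x - a)) ≠ 0) :
    HasDerivAt (fun u => -s * Real.tan (s * (u - a)))
      (-(s ^ 2 + (-s * Real.tan (s * (x - a))) ^ 2)) x := by
  have hlin : HasDerivAt (fun u : ℝ => s * (u - a)) s x := by
    simpa using ((hasDerivAt_id x).sub_const a).const_mul s
  have htan : HasDerivAt (fun u => Real.tan (s * (u - a)))
      (1 / Real.cos (s * (x - a)) ^ 2 * s) x := (Real.hasDerivAt_tan hc).comp (h₂ := Real.tan) x hlin
  have h := htan.const_mul (-s)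
  refine h.congr_deriv ?_
  rw [Real.tan_eq_sin_div_cos]
  have h2 := Real.sin_sq_add_cos_sq (s * (x - a))
  field_simp
  nlinarith [h2]

lemma hasDerivAt_p2 (s b : ℝ) {x : ℝ} (hc : Real.cos (s * (b - x)) ≠ 0) :
    HasDerivAt (fun u => s * Real.tan (s * (b - u)))
      (-(s ^ 2 + (s * Real.tan (s * (b - x))) ^ 2)) x := by
  have hlin : HasDerivAt (fun u : ℝ => s * (b - u)) (-s) x := by
    simpa using ((hasDerivAt_id x).const_sub b).const_mul s
  have htan : HasDerivAt (fun u => Real.tan (s * (b - u)))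
      (1 / Real.cos (s * (b - x)) ^ 2 * (-s)) x := (Real.hasDerivAt_tan hc).comp (h₂ := Real.tan) x hlin
  have h := htan.const_mul s
  refine h.congr_deriv ?_
  rw [Real.tan_eq_sin_div_cos]
  have h2 := Real.sin_sq_add_cos_sq (s * (b - x))
  field_simp
  nlinarith [h2]

lemma hasDerivAt_phi1 (s a C : ℝ) (x : ℝ) :
    HasDerivAt (fun u => Real.cos (s * (u - a)) / C) (-Real.sin (s * (x - a)) * s / C) x := by
  have hlin : HasDerivAt (fun u : ℝ => s * (u - a)) s x := by
    simpa using ((hasDerivAt_id x).sub_const a).const_mul s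
  exact ((Real.hasDerivAt_cos _).comp x hlin).div_const C

lemma hasDerivAt_phi2 (s b C : ℝ) (x : ℝ) :
    HasDerivAt (fun u => Real.cos (s * (b - u)) / C) (Real.sin (s * (b - x)) * s / C) x := by
  have hlin : HasDerivAt (fun u : ℝ => s * (b - u)) (-s) x := by
    simpa using ((hasDerivAt_id x).const_sub b).const_mul s
  have := ((Real.hasDerivAt_cos _).comp x hlin).div_const C
  refine this.congr_deriv ?_
  ring

lemma p_mul_phi1 {s a C : ℝ} {x : ℝ} (hc : Real.cos (s * (x - a)) ≠ 0) :
    (-s * Real.tan (s * (x - a))) * (Real.cos (s * (x - a)) / C)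
      = -Real.sin (s * (x - a)) * s / C := by
  have h := Real.tan_mul_cos hc
  calc (-s * Real.tan (s * (x - a))) * (Real.cos (s * (x - a)) / C)
      = -s * (Real.tan (s * (x - a)) * Real.cos (s * (x - a))) / C := by ring
    _ = -s * Real.sin (s * (x - a)) / C := by rw [h]
    _ = -Real.sin (s * (x - a)) * s / C := by ring

lemma p_mul_phi2 {s b C : ℝ} {x : ℝ} (hc : Real.cos (s * (b - x)) ≠ 0) :
    (s * Real.tan (s * (b - x))) * (Real.cos (s * (b - x)) / C)
      = Real.sin (s * (b - x)) * s / C := by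
  have h := Real.tan_mul_cos hc
  calc (s * Real.tan (s * (b - x))) * (Real.cos (s * (b - x)) / C)
      = s * (Real.tan (s * (b - x)) * Real.cos (s * (b - x))) / C := by ring
    _ = s * Real.sin (s * (b - x)) / C := by rw [h]
    _ = Real.sin (s * (b - x)) * s / C := by ring

lemma combined {ζ μ : ℝ} (hζ : ζ ∈ Icc (0:ℝ) 1) {p₁ p₂ y g : ℝ → ℝ}
    (hp₁ : ∀ x ∈ Icc (0:ℝ) ζ, HasDerivAt p₁ (-(μ + p₁ x ^ 2)) x)
    (hp₂ : ∀ x ∈ Icc ζ 1, HasDerivAt p₂ (-(μ + p₂ x ^ 2)) x)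
    (htest : IsTest y g) :
    (∫ x in (0:ℝ)..1, g x ^ 2) - μ * (∫ x in (0:ℝ)..1, y x ^ 2)
      + (p₂ ζ - p₁ ζ) * y ζ ^ 2 + p₁ 0 * y 0 ^ 2 - p₂ 1 * y 1 ^ 2
    = (∫ x in (0:ℝ)..ζ, (g x - p₁ x * y x) ^ 2)
      + ∫ x in ζ..1, (g x - p₂ x * y x) ^ 2 := by
  obtain ⟨hyid, hgint, hg2int⟩ := htest
  have h0ζ : Icc (0:ℝ) ζ ⊆ Icc 0 1 := Icc_subset_Icc le_rfl hζ.2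
  have hζ1 : Icc ζ (1:ℝ) ⊆ Icc 0 1 := Icc_subset_Icc hζ.1 le_rfl
  have hgA : IntegrableOn g (Icc 0 ζ) := hgint.mono_set h0ζ
  have hgB : IntegrableOn g (Icc ζ 1) := hgint.mono_set hζ1
  have hg2A : IntegrableOn (fun x => g x ^ 2) (Icc 0 ζ) := hg2int.mono_set h0ζ
  have hg2B : IntegrableOn (fun x => g x ^ 2) (Icc ζ 1) := hg2int.mono_set hζ1
  have hyA : ∀ x ∈ Icc (0:ℝ) ζ, y x = y 0 + ∫ t in (0:ℝ)..x, g t :=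
    fun x hx => hyid x (h0ζ hx)
  have hyB : ∀ x ∈ Icc ζ (1:ℝ), y x = y ζ + ∫ t in ζ..x, g t := by
    intro x hx
    have e1 := hyid x (hζ1 hx)
    have e2 := hyid ζ ⟨hζ.1, hζ.2⟩
    have hsub : (∫ t in (0:ℝ)..x, g t) - ∫ t in (0:ℝ)..ζ, g t = ∫ t in ζ..x, g t :=
      intervalIntegral.integral_interval_sub_left
        ((intervalIntegrable_iff_integrableOn_Icc_of_le (le_trans hζ.1 hx.1)).2
          (hgint.mono_set (Icc_subset_Icc le_rfl hx.2)))
        ((intervalIntegrable_iff_integrableOn_Icc_of_le hζ.1).2 hgA)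
    linarith
  have E₁ := master hζ.1 hp₁ hyA hgA hg2A
  have E₂ := master hζ.2 hp₂ hyB hgB hg2B
  have hyc : ContinuousOn y (Icc 0 1) := ycont hyid hgint
  have hy2int : IntegrableOn (fun x => y x ^ 2) (Icc 0 1) := (hyc.pow 2).integrableOn_Icc
  have iiA : ∀ {f : ℝ → ℝ}, IntegrableOn f (Icc 0 1) → IntervalIntegrable f volume 0 ζ :=
    fun hf => (intervalIntegrable_iff_integrableOn_Icc_of_le hζ.1).2 (hf.mono_set h0ζ)
  have iiB : ∀ {f : ℝ → ℝ}, IntegrableOn f (Icc 0 1) → IntervalIntegrable f volume ζ 1 :=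
    fun hf => (intervalIntegrable_iff_integrableOn_Icc_of_le hζ.2).2 (hf.mono_set hζ1)
  have splitg : (∫ x in (0:ℝ)..ζ, g x ^ 2) + ∫ x in ζ..1, g x ^ 2
      = ∫ x in (0:ℝ)..1, g x ^ 2 :=
    intervalIntegral.integral_add_adjacent_intervals (iiA hg2int) (iiB hg2int)
  have splity : (∫ x in (0:ℝ)..ζ, y x ^ 2) + ∫ x in ζ..1, y x ^ 2
      = ∫ x in (0:ℝ)..1, y x ^ 2 :=
    intervalIntegral.integral_add_adjacent_intervals (iiA hy2int) (iiB hy2int)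
  have splity2 : μ * (∫ x in (0:ℝ)..ζ, y x ^ 2) + μ * (∫ x in ζ..1, y x ^ 2)
      = μ * ∫ x in (0:ℝ)..1, y x ^ 2 := by rw [← splity]; ring
  rw [E₁, E₂]
  linarith

lemma aeEqIccRight {ζ e : ℝ} {f h : ℝ → ℝ} (H : ∀ x, ζ < x → f x = h x) :
    f =ᵐ[volume.restrict (Icc ζ e)] h := by
  refine (ae_restrict_iff' measurableSet_Icc).2 ?_
  rw [MeasureTheory.ae_iff]
  refine measure_mono_null ?_ (Real.volume_singleton (a := ζ))
  intro x hx
  simp only [Set.mem_setOf_eq, Classical.not_imp] at hx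
  obtain ⟨hmem, hne⟩ := hx
  by_contra hxζ
  have : ζ < x := lt_of_le_of_ne hmem.1 (fun h' => hxζ (by simp [h'.symm]))
  exact hne (H x this)

theorem stmt13 (k0 k1 : ℝ) (hk0 : 0 ≤ k0) (hk01 : k0 ≤ k1)
    (μ ζ : ℝ) (hμ : 0 < μ) (hζ : ζ ∈ Icc (0:ℝ) 1)
    (h1 : Real.sqrt μ * (ζ - alphaCoef k0 μ) ∈ Ioo (-(Real.pi / 2)) (Real.pi / 2))
    (h2 : Real.sqrt μ * (1 - alphaCoef k1 μ - ζ) ∈ Ioo (-(Real.pi / 2)) (Real.pi / 2)) :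
    lam1Delta k0 k1
      (Real.sqrt μ * (Real.tan (Real.sqrt μ * (ζ - alphaCoef k0 μ))
        + Real.tan (Real.sqrt μ * (1 - alphaCoef k1 μ - ζ)))) ζ = μ := by
  obtain ⟨hζ0, hζ1⟩ := hζ
  set s := Real.sqrt μ with hsdef
  have hs : 0 < s := Real.sqrt_pos.2 hμ
  have hs2 : s ^ 2 = μ := Real.sq_sqrt hμ.le
  set α := alphaCoef k0 μ with hαdef
  set β := alphaCoef k1 μ with hβdef
  set b : ℝ := 1 - β with hbdef
  have hsα : s * α = Real.arctan (k0 ^ 2 / s) := by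
    rw [hαdef, alphaCoef, ← hsdef]; field_simp
  have hsβ : s * β = Real.arctan (k1 ^ 2 / s) := by
    rw [hβdef, alphaCoef, ← hsdef]; field_simp
  have hα0 : 0 ≤ s * α := by
    rw [hsα]
    have h := Real.arctan_strictMono.monotone
      (show (0:ℝ) ≤ k0 ^ 2 / s from div_nonneg (sq_nonneg _) hs.le)
    rwa [Real.arctan_zero] at h
  have hαlt : s * α < π / 2 := hsα ▸ Real.arctan_lt_pi_div_two _
  have hβ0 : 0 ≤ s * β := by
    rw [hsβ]
    have h := Real.arctan_strictMono.monotone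
      (show (0:ℝ) ≤ k1 ^ 2 / s from div_nonneg (sq_nonneg _) hs.le)
    rwa [Real.arctan_zero] at h
  have hβlt : s * β < π / 2 := hsβ ▸ Real.arctan_lt_pi_div_two _
  set p₁ : ℝ → ℝ := fun x => -s * Real.tan (s * (x - α)) with hp₁def
  set p₂ : ℝ → ℝ := fun x => s * Real.tan (s * (b - x)) with hp₂def
  have hbζ : s * (b - ζ) = s * (1 - β - ζ) := by rw [hbdef]
  have d₁ : ∀ x ∈ Icc (0:ℝ) ζ, s * (x - α) ∈ Ioo (-(π/2)) (π/2) := by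
    intro x hx
    constructor
    · have h : -(s * α) ≤ s * (x - α) := by nlinarith [hx.1]
      linarith
    · have h : s * (x - α) ≤ s * (ζ - α) := by nlinarith [hx.2]
      exact lt_of_le_of_lt h h1.2
  have d₂ : ∀ x ∈ Icc ζ (1:ℝ), s * (b - x) ∈ Ioo (-(π/2)) (π/2) := by
    intro x hx
    constructor
    · have h : -(s * β) ≤ s * (b - x) := by rw [hbdef]; nlinarith [hx.2]
      linarith
    · have h : s * (b - x) ≤ s * (b - ζ) := by nlinarith [hx.1]
      rw [hbζ] at h
      exact lt_of_le_of_lt h h2.2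
  have c₁ : ∀ x ∈ Icc (0:ℝ) ζ, 0 < Real.cos (s * (x - α)) :=
    fun x hx => Real.cos_pos_of_mem_Ioo (d₁ x hx)
  have c₂ : ∀ x ∈ Icc ζ (1:ℝ), 0 < Real.cos (s * (b - x)) :=
    fun x hx => Real.cos_pos_of_mem_Ioo (d₂ x hx)
  have hp₁ : ∀ x ∈ Icc (0:ℝ) ζ, HasDerivAt p₁ (-(μ + p₁ x ^ 2)) x := by
    intro x hx
    have h := hasDerivAt_p1 s α (c₁ x hx).ne'
    rw [hp₁def, ← hs2]
    exact h
  have hp₂ : ∀ x ∈ Icc ζ (1:ℝ), HasDerivAt p₂ (-(μ + p₂ x ^ 2)) x := by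
    intro x hx
    have h := hasDerivAt_p2 s b (c₂ x hx).ne'
    rw [hp₂def, ← hs2]
    exact h
  have vp₁0 : p₁ 0 = k0 ^ 2 := by
    rw [hp₁def]
    show -s * Real.tan (s * ((0:ℝ) - α)) = k0 ^ 2
    rw [show s * ((0:ℝ) - α) = -(s * α) by ring, Real.tan_neg, hsα, Real.tan_arctan]
    field_simp
  have vp₂1 : p₂ 1 = -k1 ^ 2 := by
    rw [hp₂def]
    show s * Real.tan (s * (b - 1)) = -k1 ^ 2
    rw [show s * (b - 1) = -(s * β) by rw [hbdef]; ring, Real.tan_neg, hsβ, Real.tan_arctan]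
    field_simp
  have vjump : p₂ ζ - p₁ ζ
      = s * (Real.tan (s * (ζ - α)) + Real.tan (s * (b - ζ))) := by
    show s * Real.tan (s * (b - ζ)) - -s * Real.tan (s * (ζ - α)) = _
    ring
  -- the eigenfunction
  set C₁ : ℝ := Real.cos (s * (ζ - α)) with hC₁def
  set C₂ : ℝ := Real.cos (s * (b - ζ)) with hC₂def
  have hC₁ : 0 < C₁ := c₁ ζ ⟨hζ0, le_rfl⟩
  have hC₂ : 0 < C₂ := c₂ ζ ⟨le_rfl, hζ1⟩
  set φ₁ : ℝ → ℝ := fun x => Real.cos (s * (x - α)) / C₁ with hφ₁def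
  set φ₂ : ℝ → ℝ := fun x => Real.cos (s * (b - x)) / C₂ with hφ₂def
  set φ : ℝ → ℝ := fun x => if x ≤ ζ then φ₁ x else φ₂ x with hφdef
  set gφ : ℝ → ℝ := fun x => if x ≤ ζ then p₁ x * φ₁ x else p₂ x * φ₂ x with hgφdef
  have hφle : ∀ x, x ≤ ζ → φ x = φ₁ x := fun x hx => by rw [hφdef]; exact if_pos hx
  have hφgt : ∀ x, ¬ x ≤ ζ → φ x = φ₂ x := fun x hx => by rw [hφdef]; exact if_neg hx
  have hgle : ∀ x, x ≤ ζ → gφ x = p₁ x * φ₁ x := fun x hx => by rw [hgφdef]; exact if_pos hx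
  have hggt : ∀ x, ¬ x ≤ ζ → gφ x = p₂ x * φ₂ x := fun x hx => by rw [hgφdef]; exact if_neg hx
  have hφ₁ζ : φ₁ ζ = 1 := div_self hC₁.ne'
  have hφ₂ζ : φ₂ ζ = 1 := div_self hC₂.ne'
  have hlin₁ : Continuous (fun u : ℝ => s * (u - α)) :=
    continuous_const.mul (continuous_id.sub continuous_const)
  have hlin₂ : Continuous (fun u : ℝ => s * (b - u)) :=
    continuous_const.mul (continuous_const.sub continuous_id)
  have hφ₁c : Continuous φ₁ := by
    rw [hφ₁def]; exact (Real.continuous_cos.comp hlin₁).div_const _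
  have hφ₂c : Continuous φ₂ := by
    rw [hφ₂def]; exact (Real.continuous_cos.comp hlin₂).div_const _
  have hφc : Continuous φ := by
    rw [hφdef]
    exact Continuous.if_le hφ₁c hφ₂c continuous_id continuous_const
      (fun x hx => by rw [hx, hφ₁ζ, hφ₂ζ])
  have hp₁c : ContinuousOn p₁ (Icc (0:ℝ) ζ) :=
    fun x hx => ((hp₁ x hx).continuousAt).continuousWithinAt
  have hp₂c : ContinuousOn p₂ (Icc ζ (1:ℝ)) :=
    fun x hx => ((hp₂ x hx).continuousAt).continuousWithinAt
  -- integrability of gφ and gφ²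
  have heqA : EqOn gφ (fun x => p₁ x * φ₁ x) (Icc (0:ℝ) ζ) := fun x hx => hgle x hx.2
  have heqB : ∀ x, ζ < x → p₂ x * φ₂ x = gφ x := fun x hx => (hggt x (not_le.2 hx)).symm
  have hgφA : IntegrableOn gφ (Icc (0:ℝ) ζ) :=
    ((hp₁c.mul hφ₁c.continuousOn).integrableOn_Icc).congr_fun heqA.symm measurableSet_Icc
  have hgφB : IntegrableOn gφ (Icc ζ (1:ℝ)) :=
    ((hp₂c.mul hφ₂c.continuousOn).integrableOn_Icc).congr (aeEqIccRight heqB)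
  have hgφ2A : IntegrableOn (fun x => gφ x ^ 2) (Icc (0:ℝ) ζ) :=
    (((hp₁c.mul hφ₁c.continuousOn).pow 2).integrableOn_Icc).congr_fun
      (fun x hx => by rw [heqA hx]; rfl) measurableSet_Icc
  have hgφ2B : IntegrableOn (fun x => gφ x ^ 2) (Icc ζ (1:ℝ)) :=
    (((hp₂c.mul hφ₂c.continuousOn).pow 2).integrableOn_Icc).congr
      (aeEqIccRight (fun x hx => by show (p₂ x * φ₂ x) ^ 2 = gφ x ^ 2; rw [heqB x hx]))
  have hIccU : Icc (0:ℝ) ζ ∪ Icc ζ 1 = Icc (0:ℝ) 1 := Set.Icc_union_Icc_eq_Icc hζ0 hζ1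
  have hgφint : IntegrableOn gφ (Icc (0:ℝ) 1) := by
    rw [← hIccU]; exact hgφA.union hgφB
  have hgφ2int : IntegrableOn (fun x => gφ x ^ 2) (Icc (0:ℝ) 1) := by
    rw [← hIccU]; exact hgφ2A.union hgφ2B
  -- FTC identities
  have ftc₁ : ∀ x ∈ Icc (0:ℝ) ζ, (∫ t in (0:ℝ)..x, gφ t) = φ₁ x - φ₁ 0 := by
    intro x hx
    have hcg : (∫ t in (0:ℝ)..x, gφ t)
        = ∫ t in (0:ℝ)..x, (-Real.sin (s * (t - α)) * s / C₁) := by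
      apply intervalIntegral.integral_congr
      intro t ht
      rw [Set.uIcc_of_le hx.1] at ht
      have htζ : t ∈ Icc (0:ℝ) ζ := ⟨ht.1, le_trans ht.2 hx.2⟩
      rw [heqA htζ]
      exact p_mul_phi1 (c₁ t htζ).ne'
    rw [hcg]
    exact intervalIntegral.integral_eq_sub_of_hasDerivAt
      (fun t _ => hasDerivAt_phi1 s α C₁ t)
      (Continuous.intervalIntegrable
        (((Real.continuous_sin.comp hlin₁).neg.mul continuous_const).div_const _) _ _)
  have ftc₂ : ∀ x ∈ Icc ζ (1:ℝ), (∫ t in ζ..x, gφ t) = φ₂ x - φ₂ ζ := by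
    intro x hx
    have hcg : (∫ t in ζ..x, gφ t)
        = ∫ t in ζ..x, (Real.sin (s * (b - t)) * s / C₂) := by
      rw [intervalIntegral.integral_of_le hx.1, intervalIntegral.integral_of_le hx.1]
      apply setIntegral_congr_fun measurableSet_Ioc
      intro t ht
      have htI : t ∈ Icc ζ (1:ℝ) := ⟨ht.1.le, le_trans ht.2 hx.2⟩
      rw [← heqB t ht.1]
      exact p_mul_phi2 (c₂ t htI).ne'
    rw [hcg]
    exact intervalIntegral.integral_eq_sub_of_hasDerivAt
      (fun t _ => hasDerivAt_phi2 s b C₂ t)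
      (Continuous.intervalIntegrable
        (((Real.continuous_sin.comp hlin₂).mul continuous_const).div_const _) _ _)
  have testφ : IsTest φ gφ := by
    refine ⟨?_, hgφint, hgφ2int⟩
    intro x hx
    have hφ0 : φ 0 = φ₁ 0 := hφle 0 hζ0
    by_cases hxζ : x ≤ ζ
    · have hxI : x ∈ Icc (0:ℝ) ζ := ⟨hx.1, hxζ⟩
      have := ftc₁ x hxI
      rw [hφle x hxζ, hφ0]
      linarith
    · have hxI : x ∈ Icc ζ (1:ℝ) := ⟨(not_le.1 hxζ).le, hx.2⟩
      have hsplit : (∫ t in (0:ℝ)..x, gφ t)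
          = (∫ t in (0:ℝ)..ζ, gφ t) + ∫ t in ζ..x, gφ t :=
        (intervalIntegral.integral_add_adjacent_intervals
          ((intervalIntegrable_iff_integrableOn_Icc_of_le hζ0).2 hgφA)
          ((intervalIntegrable_iff_integrableOn_Icc_of_le hxI.1).2
            (hgφB.mono_set (Icc_subset_Icc le_rfl hx.2)))).symm
      have e1 := ftc₁ ζ ⟨hζ0, le_rfl⟩
      have e2 := ftc₂ x hxI
      rw [hφgt x hxζ, hφ0, hsplit, e1, e2, hφ₁ζ, hφ₂ζ]
      ring
  -- positivity of the denominator
  have hφpos : ∀ x ∈ Icc (0:ℝ) 1, 0 < φ x := by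
    intro x hx
    by_cases hxζ : x ≤ ζ
    · rw [hφle x hxζ]
      exact div_pos (c₁ x ⟨hx.1, hxζ⟩) hC₁
    · rw [hφgt x hxζ]
      exact div_pos (c₂ x ⟨(not_le.1 hxζ).le, hx.2⟩) hC₂
  have hden : 0 < ∫ x in (0:ℝ)..1, φ x ^ 2 := by
    apply intervalIntegral.intervalIntegral_pos_of_pos_on
      (Continuous.intervalIntegrable (hφc.pow 2) _ _)
      (fun x hx => pow_pos (hφpos x ⟨hx.1.le, hx.2.le⟩) 2) one_pos
  -- the combined identity for φ
  have hcombφ := combined ⟨hζ0, hζ1⟩ hp₁ hp₂ testφ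
  have hE₁φ : (∫ x in (0:ℝ)..ζ, (gφ x - p₁ x * φ x) ^ 2) = 0 := by
    have : EqOn (fun x => (gφ x - p₁ x * φ x) ^ 2) (fun _ => (0:ℝ)) (Set.uIcc 0 ζ) := by
      intro t ht
      rw [Set.uIcc_of_le hζ0] at ht
      show (gφ t - p₁ t * φ t) ^ 2 = 0
      rw [heqA ht, hφle t ht.2]
      ring
    rw [intervalIntegral.integral_congr this, intervalIntegral.integral_zero]
  have hE₂φ : (∫ x in ζ..1, (gφ x - p₂ x * φ x) ^ 2) = 0 := by
    rw [intervalIntegral.integral_of_le hζ1]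
    have : EqOn (fun x => (gφ x - p₂ x * φ x) ^ 2) (fun _ => (0:ℝ)) (Ioc ζ 1) := by
      intro t ht
      show (gφ t - p₂ t * φ t) ^ 2 = 0
      rw [← heqB t ht.1, hφgt t (not_le.2 ht.1)]
      ring
    rw [setIntegral_congr_fun measurableSet_Ioc this]
    simp
  -- conclusion
  have lower : ∀ (y g : ℝ → ℝ), IsTest y g →
      μ * (∫ x in (0:ℝ)..1, y x ^ 2)
        ≤ (∫ x in (0:ℝ)..1, g x ^ 2)
          + (s * (Real.tan (s * (ζ - α)) + Real.tan (s * (b - ζ)))) * y ζ ^ 2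
          + k0 ^ 2 * y 0 ^ 2 + k1 ^ 2 * y 1 ^ 2 := by
    intro y g htest
    have hcomb := combined ⟨hζ0, hζ1⟩ hp₁ hp₂ htest
    have hE₁ : 0 ≤ ∫ x in (0:ℝ)..ζ, (g x - p₁ x * y x) ^ 2 :=
      intervalIntegral.integral_nonneg hζ0 (fun u _ => sq_nonneg _)
    have hE₂ : 0 ≤ ∫ x in ζ..1, (g x - p₂ x * y x) ^ 2 :=
      intervalIntegral.integral_nonneg hζ1 (fun u _ => sq_nonneg _)
    rw [← vjump, ← vp₁0, show k1 ^ 2 = -(p₂ 1) by rw [vp₂1]; ring]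
    linarith [hcomb, hE₁, hE₂]
  have hval : μ = ((∫ x in (0:ℝ)..1, gφ x ^ 2)
      + (s * (Real.tan (s * (ζ - α)) + Real.tan (s * (b - ζ)))) * φ ζ ^ 2
      + k0 ^ 2 * φ 0 ^ 2 + k1 ^ 2 * φ 1 ^ 2) / (∫ x in (0:ℝ)..1, φ x ^ 2) := by
    rw [eq_div_iff hden.ne', ← vjump, ← vp₁0, show k1 ^ 2 = -(p₂ 1) by rw [vp₂1]; ring]
    rw [hE₁φ, hE₂φ] at hcombφ
    linarith [hcombφ]
  rw [lam1Delta]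
  apply le_antisymm
  · refine csInf_le ⟨μ, ?_⟩ ⟨φ, gφ, testφ, hden, hval⟩
    rintro r ⟨y, g, htest, hdeny, rfl⟩
    rw [le_div_iff₀ hdeny]
    exact lower y g htest
  · refine le_csInf ⟨_, ⟨φ, gφ, testφ, hden, rfl⟩⟩ ?_
    rintro r ⟨y, g, htest, hdeny, rfl⟩
    rw [le_div_iff₀ hdeny]
    exact lower y g htest
end

section
/- For every ζ ∈ [0,1], setting a := −k₀²/(1 + k₀² ζ) − k₁²/(1 + k₁² (1 − ζ)), one has λ₁(a·δ_ζ) = 0. -/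
open MeasureTheory Set Real Filter

lemma iiIcc {f : ℝ → ℝ} {a b : ℝ} (hab : a ≤ b) (h : IntegrableOn f (Icc a b)) :
    IntervalIntegrable f volume a b := by
  apply MeasureTheory.IntegrableOn.intervalIntegrable
  rwa [uIcc_of_le hab]

lemma cs_interval (f : ℝ → ℝ) (a b : ℝ) (hab : a ≤ b)
    (hf : IntervalIntegrable f volume a b)
    (hf2 : IntervalIntegrable (fun x => f x ^ 2) volume a b) :
    (∫ x in a..b, f x) ^ 2 ≤ (b - a) * ∫ x in a..b, f x ^ 2 := by
  rcases eq_or_lt_of_le hab with h | h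
  · subst h; simp
  · set I := ∫ x in a..b, f x with hI
    set J := ∫ x in a..b, f x ^ 2 with hJ
    set m := I / (b - a) with hm
    have hexp : ∫ x in a..b, (f x - m) ^ 2 = J - 2 * m * I + (b - a) * m ^ 2 := by
      have he : ∀ x, (f x - m) ^ 2 = f x ^ 2 - (2 * m) * f x + m ^ 2 := by intro x; ring
      simp_rw [he]
      rw [intervalIntegral.integral_add ((hf2).sub (hf.const_mul _)) intervalIntegrable_const,
        intervalIntegral.integral_sub hf2 (hf.const_mul _),
        intervalIntegral.integral_const_mul, intervalIntegral.integral_const]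
      simp [smul_eq_mul]
      rfl
    have h0 : 0 ≤ ∫ x in a..b, (f x - m) ^ 2 :=
      intervalIntegral.integral_nonneg hab (fun x _ => sq_nonneg _)
    rw [hexp] at h0
    have hmb : m * (b - a) = I := div_mul_cancel₀ _ (sub_ne_zero.2 h.ne')
    nlinarith [h0, hmb, h, sq_nonneg (I - m * (b - a))]

lemma key_ineq (A ζ u v W : ℝ) (hA : 0 ≤ A) (hζ : 0 ≤ ζ) (hW : 0 ≤ W)
    (hv : v ^ 2 ≤ ζ * W) :
    A / (1 + A * ζ) * (u + v) ^ 2 ≤ A * u ^ 2 + W := by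
  have hd : (0:ℝ) < 1 + A * ζ := by positivity
  rw [div_mul_eq_mul_div, div_le_iff₀ hd]
  rcases eq_or_lt_of_le hζ with h | h
  · have hv0 : v = 0 := by nlinarith [sq_nonneg v]
    rw [hv0, ← h]
    nlinarith
  · nlinarith [sq_nonneg (v - A * ζ * u), mul_nonneg (mul_nonneg hA h.le) (sub_nonneg.2 hv),
      sub_nonneg.2 hv, h]

set_option maxHeartbeats 1000000 in
lemma general (A B a ζ : ℝ) (hA : 0 ≤ A) (hB : 0 ≤ B) (hζ0 : 0 ≤ ζ) (hζ1 : ζ ≤ 1)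
    (ha : a = -(A / (1 + A * ζ)) - B / (1 + B * (1 - ζ))) :
    sInf { r : ℝ | ∃ y g : ℝ → ℝ, IsTest y g ∧ (0 < ∫ x in (0:ℝ)..1, (y x) ^ 2) ∧
      r = ((∫ x in (0:ℝ)..1, (g x) ^ 2) + a * (y ζ) ^ 2
            + A * (y 0) ^ 2 + B * (y 1) ^ 2) / (∫ x in (0:ℝ)..1, (y x) ^ 2) } = 0 := by
  have hd0 : (0:ℝ) < 1 + A * ζ := by positivity
  have hd1 : (0:ℝ) < 1 + B * (1 - ζ) := by nlinarith
  set S := { r : ℝ | ∃ y g : ℝ → ℝ, IsTest y g ∧ (0 < ∫ x in (0:ℝ)..1, (y x) ^ 2) ∧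
      r = ((∫ x in (0:ℝ)..1, (g x) ^ 2) + a * (y ζ) ^ 2
            + A * (y 0) ^ 2 + B * (y 1) ^ 2) / (∫ x in (0:ℝ)..1, (y x) ^ 2) } with hS
  -- lower bound
  have hlb : ∀ r ∈ S, (0:ℝ) ≤ r := by
    rintro r ⟨y, g, ⟨hFTC, hgInt, hg2Int⟩, hpos, rfl⟩
    apply div_nonneg _ hpos.le
    -- integrability pieces
    have hg01 : IntervalIntegrable g volume 0 ζ :=
      iiIcc hζ0 (hgInt.mono_set (Icc_subset_Icc le_rfl hζ1))
    have hg11 : IntervalIntegrable g volume ζ 1 :=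
      iiIcc hζ1 (hgInt.mono_set (Icc_subset_Icc hζ0 le_rfl))
    have hg201 : IntervalIntegrable (fun x => g x ^ 2) volume 0 ζ :=
      iiIcc hζ0 (hg2Int.mono_set (Icc_subset_Icc le_rfl hζ1))
    have hg211 : IntervalIntegrable (fun x => g x ^ 2) volume ζ 1 :=
      iiIcc hζ1 (hg2Int.mono_set (Icc_subset_Icc hζ0 le_rfl))
    set v0 := ∫ x in (0:ℝ)..ζ, g x with hv0
    set v1 := ∫ x in ζ..(1:ℝ), g x with hv1
    set W0 := ∫ x in (0:ℝ)..ζ, g x ^ 2 with hW0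
    set W1 := ∫ x in ζ..(1:ℝ), g x ^ 2 with hW1
    have hW0n : 0 ≤ W0 := intervalIntegral.integral_nonneg hζ0 (fun x _ => sq_nonneg _)
    have hW1n : 0 ≤ W1 := intervalIntegral.integral_nonneg hζ1 (fun x _ => sq_nonneg _)
    have hsplit : (∫ x in (0:ℝ)..1, g x ^ 2) = W0 + W1 :=
      (intervalIntegral.integral_add_adjacent_intervals hg201 hg211).symm
    have hcs0 : v0 ^ 2 ≤ ζ * W0 := by
      have := cs_interval g 0 ζ hζ0 hg01 hg201
      simpa using this
    have hcs1 : v1 ^ 2 ≤ (1 - ζ) * W1 := cs_interval g ζ 1 hζ1 hg11 hg211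
    have hyζ : y ζ = y 0 + v0 := hFTC ζ ⟨hζ0, hζ1⟩
    have hy1 : y 1 = y 0 + (v0 + v1) := by
      rw [hFTC 1 ⟨zero_le_one, le_rfl⟩,
        ← intervalIntegral.integral_add_adjacent_intervals hg01 hg11]
    have k0 : A / (1 + A * ζ) * (y 0 + v0) ^ 2 ≤ A * (y 0) ^ 2 + W0 :=
      key_ineq A ζ (y 0) v0 W0 hA hζ0 hW0n hcs0
    have k1 : B / (1 + B * (1 - ζ)) * (y 1 + -v1) ^ 2 ≤ B * (y 1) ^ 2 + W1 :=
      key_ineq B (1 - ζ) (y 1) (-v1) W1 hB (by linarith) hW1n (by simpa using hcs1)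
    have hyζ' : y ζ = y 1 + -v1 := by rw [hy1, hyζ]; ring
    rw [hsplit, ha]
    have e0 : (y 0 + v0) ^ 2 = (y ζ) ^ 2 := by rw [hyζ]
    have e1 : (y 1 + -v1) ^ 2 = (y ζ) ^ 2 := by rw [hyζ']
    rw [e0] at k0; rw [e1] at k1
    nlinarith [k0, k1]
  -- the eigenfunction
  set c := (1 + A * ζ) / (1 + B * (1 - ζ)) with hc
  have hcpos : 0 < c := div_pos hd0 hd1
  have hceq : c * (1 + B * (1 - ζ)) = 1 + A * ζ := div_mul_cancel₀ _ hd1.ne'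
  set Y : ℝ → ℝ := fun x => if x ≤ ζ then 1 + A * x else c * (1 + B * (1 - x)) with hY
  set G : ℝ → ℝ := fun x => if x ≤ ζ then A else -(c * B) with hG
  have hYcont : Continuous Y := by
    apply Continuous.if_le (continuous_const.add (continuous_const.mul continuous_id)) (continuous_const.mul (continuous_const.add (continuous_const.mul (continuous_const.sub continuous_id)))) continuous_id continuous_const
    intro x hx
    show 1 + A * x = c * (1 + B * (1 - x))
    rw [show x = ζ from hx, ← hceq]
  have hGInt : IntegrableOn G (Icc (0:ℝ) 1) := by
    have hGeq : G = fun x => (Iic ζ).indicator (fun _ => A + c * B) x + (-(c * B)) := by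
      funext x
      by_cases hx : x ≤ ζ
      · simp only [hG, if_pos hx, Set.indicator_of_mem (mem_Iic.2 hx)]; ring
      · simp only [hG, if_neg hx, Set.indicator_of_notMem (fun h => hx (mem_Iic.1 h))]; ring
    rw [hGeq]
    exact (((integrable_indicator_iff measurableSet_Iic).2
      (integrableOn_const (by
        rw [Measure.restrict_apply measurableSet_Iic]
        exact (lt_of_le_of_lt (measure_mono (inter_subset_right)) measure_Icc_lt_top).ne))).add
      (integrable_const _))
  have hG2Int : IntegrableOn (fun x => G x ^ 2) (Icc (0:ℝ) 1) := by
    have hGeq : (fun x => G x ^ 2)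
        = fun x => (Iic ζ).indicator (fun _ => A ^ 2 - (c * B) ^ 2) x + (c * B) ^ 2 := by
      funext x
      by_cases hx : x ≤ ζ
      · simp only [hG, if_pos hx, Set.indicator_of_mem (mem_Iic.2 hx)]; ring
      · simp only [hG, if_neg hx, Set.indicator_of_notMem (fun h => hx (mem_Iic.1 h))]; ring
    rw [hGeq]
    exact (((integrable_indicator_iff measurableSet_Iic).2
      (integrableOn_const (by
        rw [Measure.restrict_apply measurableSet_Iic]
        exact (lt_of_le_of_lt (measure_mono (inter_subset_right)) measure_Icc_lt_top).ne))).add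
      (integrable_const _))
  have hY0 : Y 0 = 1 := by simp [hY, hζ0]
  have hYζ : Y ζ = 1 + A * ζ := by simp [hY]
  have hY1 : Y 1 = c := by
    by_cases h1 : (1:ℝ) ≤ ζ
    · have : ζ = 1 := le_antisymm hζ1 h1
      subst this
      simp [hY, hc]
    · simp [hY, h1]
  have hFTC : ∀ x ∈ Icc (0:ℝ) 1, Y x = Y 0 + ∫ t in (0:ℝ)..x, G t := by
    intro x hx
    rw [hY0]
    by_cases hxζ : x ≤ ζ
    · have : (∫ t in (0:ℝ)..x, G t) = ∫ t in (0:ℝ)..x, A := by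
        apply intervalIntegral.integral_congr
        intro t ht
        rw [uIcc_of_le hx.1] at ht
        exact if_pos (le_trans ht.2 hxζ)
      rw [this, intervalIntegral.integral_const, smul_eq_mul]
      simp only [hY, if_pos hxζ]
      ring
    · push_neg at hxζ
      have hgx1 : IntervalIntegrable G volume 0 ζ :=
        iiIcc hζ0 (hGInt.mono_set (Icc_subset_Icc le_rfl hζ1))
      have hgx2 : IntervalIntegrable G volume ζ x :=
        iiIcc hxζ.le (hGInt.mono_set (Icc_subset_Icc hζ0 hx.2))
      rw [← intervalIntegral.integral_add_adjacent_intervals hgx1 hgx2]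
      have e1 : (∫ t in (0:ℝ)..ζ, G t) = ∫ t in (0:ℝ)..ζ, A := by
        apply intervalIntegral.integral_congr
        intro t ht
        rw [uIcc_of_le hζ0] at ht
        exact if_pos ht.2
      have e2 : (∫ t in ζ..x, G t) = ∫ t in ζ..x, -(c * B) := by
        apply intervalIntegral.integral_congr_ae
        apply Filter.Eventually.of_forall
        intro t ht
        rw [uIoc_of_le hxζ.le] at ht
        exact if_neg (not_le.2 ht.1)
      rw [e1, e2, intervalIntegral.integral_const, intervalIntegral.integral_const,
        smul_eq_mul, smul_eq_mul]
      simp only [hY, if_neg (not_le.2 hxζ)]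
      linear_combination hceq
  have hYpos : ∀ x ∈ Icc (0:ℝ) 1, 0 < Y x := by
    intro x hx
    simp only [hY]
    by_cases hxζ : x ≤ ζ
    · rw [if_pos hxζ]; nlinarith [hx.1]
    · rw [if_neg hxζ]
      apply mul_pos hcpos
      nlinarith [hx.2]
  have hY2Int : IntegrableOn (fun x => Y x ^ 2) (Icc (0:ℝ) 1) :=
    (hYcont.pow 2).integrableOn_Icc
  have hD : 0 < ∫ x in (0:ℝ)..1, Y x ^ 2 := by
    apply intervalIntegral.intervalIntegral_pos_of_pos_on
      (iiIcc zero_le_one hY2Int)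
      (fun x hx => pow_pos (hYpos x ⟨hx.1.le, hx.2.le⟩) 2) zero_lt_one
  -- compute the numerator
  have hgg1 : IntervalIntegrable (fun x => G x ^ 2) volume 0 ζ :=
    iiIcc hζ0 (hG2Int.mono_set (Icc_subset_Icc le_rfl hζ1))
  have hgg2 : IntervalIntegrable (fun x => G x ^ 2) volume ζ 1 :=
    iiIcc hζ1 (hG2Int.mono_set (Icc_subset_Icc hζ0 le_rfl))
  have hI1 : (∫ x in (0:ℝ)..ζ, G x ^ 2) = ζ * A ^ 2 := by
    rw [show (∫ x in (0:ℝ)..ζ, G x ^ 2) = ∫ x in (0:ℝ)..ζ, A ^ 2 from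
      intervalIntegral.integral_congr (fun t ht => by
        rw [uIcc_of_le hζ0] at ht
        simp [hG, if_pos ht.2]),
      intervalIntegral.integral_const, smul_eq_mul]
    ring
  have hI2 : (∫ x in ζ..(1:ℝ), G x ^ 2) = (1 - ζ) * (c * B) ^ 2 := by
    rw [show (∫ x in ζ..(1:ℝ), G x ^ 2) = ∫ x in ζ..(1:ℝ), (c * B) ^ 2 from
      intervalIntegral.integral_congr_ae (Filter.Eventually.of_forall (fun t ht => by
        rw [uIoc_of_le hζ1] at ht
        simp [hG, if_neg (not_le.2 ht.1)])),
      intervalIntegral.integral_const, smul_eq_mul]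
  have hIG : (∫ x in (0:ℝ)..1, G x ^ 2) = ζ * A ^ 2 + (1 - ζ) * (c * B) ^ 2 := by
    rw [← intervalIntegral.integral_add_adjacent_intervals hgg1 hgg2, hI1, hI2]
  have hNum : (∫ x in (0:ℝ)..1, G x ^ 2) + a * (Y ζ) ^ 2
      + A * (Y 0) ^ 2 + B * (Y 1) ^ 2 = 0 := by
    rw [hIG, hYζ, hY0, hY1, ha, hc]
    have h0 := hd0.ne'
    have h1 := hd1.ne'
    simp only [div_eq_mul_inv]
    linear_combination (-A * (1 + A * ζ)) * (mul_inv_cancel₀ h0)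
      + (B * (1 + A * ζ) ^ 2 * (1 + B * (1 - ζ))⁻¹) * (mul_inv_cancel₀ h1)
  have hmem0 : (0:ℝ) ∈ S := by
    refine ⟨Y, G, ⟨hFTC, hGInt, hG2Int⟩, hD, ?_⟩
    rw [hNum]
    simp
  exact le_antisymm (csInf_le ⟨0, hlb⟩ hmem0) (le_csInf ⟨0, hmem0⟩ hlb)

theorem stmt14 (k0 k1 : ℝ) (hk0 : 0 ≤ k0) (hk01 : k0 ≤ k1)
    (ζ : ℝ) (hζ : ζ ∈ Icc (0:ℝ) 1) :
    lam1Delta k0 k1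
      (-(k0 ^ 2 / (1 + k0 ^ 2 * ζ)) - k1 ^ 2 / (1 + k1 ^ 2 * (1 - ζ))) ζ = 0 := by
  unfold lam1Delta
  exact general (k0 ^ 2) (k1 ^ 2) _ ζ (sq_nonneg _) (sq_nonneg _) hζ.1 hζ.2 rfl
end
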